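/- arXiv:math/0507397 — 6 statements merged into one kernel-verified Lean document; each statement's English description precedes it below -/
import Mathlib

section
/- Let π be a special partition of [2n+1] (non-crossing, n+1 blocks, no block containing two consecutive integers). If b < b' are two elements of the same block of π with no element of that block strictly between them, then b' - b is even. -/
open scoped Classical

def SameBlock {m : ℕ} (P : Finpartition (Finset.Icc 1 m)) (a b : ℕ) : Prop :=
  ∃ B ∈ P.parts, a ∈ B ∧ b ∈ B

def NonCrossing {m : ℕ} (P : Finpartition (Finset.Icc 1 m)) : Prop :=
  ∀ a b c d : ℕ, a < b → b < c → c < d → SameBlock P a c → SameBlock P b d →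
    SameBlock P a b

def NoConsec {m : ℕ} (P : Finpartition (Finset.Icc 1 m)) : Prop :=
  ∀ i : ℕ, ¬ SameBlock P i (i + 1)

def SpecialPartition (n : ℕ) (P : Finpartition (Finset.Icc 1 (2 * n + 1))) : Prop :=
  NonCrossing P ∧ NoConsec P ∧ P.parts.card = n + 1

def InS (n : ℕ) (s : ℕ → ℕ) : Prop :=
  (∀ i, 1 ≤ i → i ≤ n → 1 ≤ s i ∧ s i ≤ i) ∧
  (∀ i j r, 1 ≤ i → i ≤ n → s i = j → 1 ≤ r → r ≤ j - 1 → s (i - r) ≤ j - r)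

noncomputable def gap {m : ℕ} (P : Finpartition (Finset.Icc 1 m)) (i : ℕ) : ℕ :=
  sInf {b | i < b ∧ SameBlock P i b} - i

noncomputable def aSeq (n : ℕ) (P : Finpartition (Finset.Icc 1 (2 * n + 1)))
    (j : ℕ) : ℕ :=
  ((((Finset.Icc 1 (2 * n + 1)).filter (fun i => gap P i ≠ 0)).sort (· ≤ ·)).getD
    (n - j) 0) / 2


lemma myLB (E : ℕ → ℕ → Prop)
    (hs : ∀ a b, E a b → E b a) (ht : ∀ a b c, E a b → E b c → E a c)
    (hnc : ∀ a b c d : ℕ, a < b → b < c → c < d → E a c → E b d → E a b)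
    (hnocon : ∀ i, ¬ E i (i + 1)) :
    ∀ d u v, v ≤ u + d → u ≤ v →
      (∀ x, x ∈ Finset.Icc u v → E x x) →
      v + 2 ≤ u + 2 * ((Finset.Icc u v).image
        (fun x => (Finset.Icc u v).filter (fun y => E x y))).card := by
  intro d
  induction d using Nat.strong_induction_on with
  | _ d ih =>
    intro u v hd huv hrefl
    set cls : ℕ → Finset ℕ := fun x => (Finset.Icc u v).filter (fun y => E x y) with hcls
    set T := (Finset.Icc u v).image cls with hT
    rcases eq_or_lt_of_le huv with rfl | hlt
    · have hne : T.Nonempty := Finset.Nonempty.image ⟨u, by simp⟩ _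
      have := Finset.card_pos.mpr hne
      omega
    · have hdpos : 1 ≤ d := by omega
      have hrefl' : ∀ x, u ≤ x → x ≤ v → E x x := fun x h1 h2 =>
        hrefl x (Finset.mem_Icc.mpr ⟨h1, h2⟩)
      set B := (Finset.Icc u v).filter (fun y => E u y) with hBdef
      have huB : u ∈ B := Finset.mem_filter.mpr
        ⟨Finset.mem_Icc.mpr ⟨le_rfl, huv⟩, hrefl' u le_rfl huv⟩
      set w := B.max' ⟨u, huB⟩ with hwdef
      have hwB : w ∈ B := B.max'_mem _
      have hwIcc : w ∈ Finset.Icc u v := (Finset.mem_filter.mp hwB).1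
      have hEuw : E u w := (Finset.mem_filter.mp hwB).2
      have huw : u ≤ w := (Finset.mem_Icc.mp hwIcc).1
      have hwv : w ≤ v := (Finset.mem_Icc.mp hwIcc).2
      have hmaxB : ∀ z ∈ B, z ≤ w := fun z hz => B.le_max' z hz
      by_cases hw : w = u
      · -- B = {u}; recurse on [u+1, v]
        have hBsub : ∀ z ∈ B, z = u := by
          intro z hz
          have h1 := hmaxB z hz
          have h2 := (Finset.mem_Icc.mp (Finset.mem_filter.mp hz).1).1
          omega
        have hIH := ih (d - 1) (by omega) (u + 1) v (by omega) (by omega)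
          (fun x hx => hrefl x (by
            rw [Finset.mem_Icc] at hx ⊢; omega))
        -- classes over [u+1,v] agree with big classes
        have hagree : ∀ x ∈ Finset.Icc (u + 1) v,
            cls x = (Finset.Icc (u + 1) v).filter (fun y => E x y) := by
          intro x hx
          rw [Finset.mem_Icc] at hx
          ext y
          simp only [hcls, Finset.mem_filter, Finset.mem_Icc]
          constructor
          · rintro ⟨⟨h1, h2⟩, h3⟩
            refine ⟨⟨?_, h2⟩, h3⟩
            rcases eq_or_lt_of_le h1 with rfl | hy
            · exfalso
              have : x ∈ B := Finset.mem_filter.mpr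
                ⟨Finset.mem_Icc.mpr ⟨by omega, hx.2⟩, hs _ _ h3⟩
              have := hBsub x this
              omega
            · omega
          · rintro ⟨⟨h1, h2⟩, h3⟩
            exact ⟨⟨by omega, h2⟩, h3⟩
        have hsplit : Finset.Icc u v = insert u (Finset.Icc (u + 1) v) := by
          ext y; simp only [Finset.mem_Icc, Finset.mem_insert]; omega
        have hTeq : T = insert (cls u)
            ((Finset.Icc (u + 1) v).image
              (fun x => (Finset.Icc (u + 1) v).filter (fun y => E x y))) := by
          rw [hT, hsplit, Finset.image_insert]
          congr 1
          apply Finset.image_congr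
          intro x hx
          exact hagree x hx
        have hnotmem : cls u ∉ (Finset.Icc (u + 1) v).image
            (fun x => (Finset.Icc (u + 1) v).filter (fun y => E x y)) := by
          intro hmem
          rw [Finset.mem_image] at hmem
          obtain ⟨x, hx, hxe⟩ := hmem
          have huc : u ∈ cls u := Finset.mem_filter.mpr
            ⟨Finset.mem_Icc.mpr ⟨le_rfl, huv⟩, hrefl' u le_rfl huv⟩
          rw [← hxe] at huc
          have := (Finset.mem_Icc.mp (Finset.mem_filter.mp huc).1).1
          omega
        have hcard : T.card = ((Finset.Icc (u + 1) v).image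
            (fun x => (Finset.Icc (u + 1) v).filter (fun y => E x y))).card + 1 := by
          rw [hTeq]; exact Finset.card_insert_of_notMem hnotmem
        omega
      · -- w > u
        have huw2 : u + 2 ≤ w := by
          rcases Nat.lt_or_ge (u + 1) w with h1 | h1
          · omega
          · exfalso
            have : w = u + 1 := by omega
            rw [this] at hEuw
            exact hnocon u hEuw
        set B' := B.erase w with hB'def
        have huB' : u ∈ B' := Finset.mem_erase.mpr ⟨by omega, huB⟩
        set w' := B'.max' ⟨u, huB'⟩ with hw'def
        have hw'B' : w' ∈ B' := B'.max'_mem _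
        have hw'B : w' ∈ B := Finset.mem_of_mem_erase hw'B'
        have hEuw' : E u w' := (Finset.mem_filter.mp hw'B).2
        have huw' : u ≤ w' := (Finset.mem_Icc.mp (Finset.mem_filter.mp hw'B).1).1
        have hw'w : w' < w := by
          have h1 := hmaxB w' hw'B
          have h2 := (Finset.mem_erase.mp hw'B').1
          omega
        have hEw'w : E w' w := ht _ _ _ (hs _ _ hEuw') hEuw
        have hgap : w' + 2 ≤ w := by
          rcases Nat.lt_or_ge (w' + 1) w with h1 | h1
          · omega
          · exfalso
            have : w = w' + 1 := by omega
            rw [this] at hEw'w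
            exact hnocon w' hEw'w
        have hnogapB : ∀ z ∈ B, z ≤ w' ∨ z = w := by
          intro z hz
          by_cases hzw : z = w
          · exact Or.inr hzw
          · exact Or.inl (B'.le_max' z (Finset.mem_erase.mpr ⟨hzw, hz⟩))
        -- membership in B via E u
        have hmemB : ∀ x, u ≤ x → x ≤ v → E u x → (x ≤ w' ∨ x = w) := by
          intro x h1 h2 h3
          exact hnogapB x (Finset.mem_filter.mpr ⟨Finset.mem_Icc.mpr ⟨h1, h2⟩, h3⟩)
        -- I-closed
        have hIclosed : ∀ x, w' < x → x < w → ∀ y, y ∈ Finset.Icc u v → E x y →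
            (w' < y ∧ y < w) := by
          intro x hx1 hx2 y hy hExy
          rw [Finset.mem_Icc] at hy
          have hxv : x ≤ v := by omega
          have hux : u ≤ x := by omega
          have hxnB : ¬ E u x := by
            intro hEux
            rcases hmemB x hux hxv hEux with h | h <;> omega
          by_contra hcon
          push_neg at hcon
          -- y ≤ w' or y ≥ w
          rcases Nat.lt_or_ge y w' with hy1 | hy1
          · -- y < w' : crossing y w' x w
            have : E y w' := hnc y w' x w hy1 (by omega) hx2 (hs _ _ hExy) hEw'w
            exact hxnB (ht _ _ _ (ht _ _ _ hEuw' (hs _ _ this)) (hs _ _ hExy))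
          · rcases Nat.eq_or_lt_of_le hy1 with hy2 | hy2
            · -- y = w'
              exact hxnB (ht _ _ _ hEuw' (by rw [hy2]; exact hs _ _ hExy))
            · -- y > w', so by hcon y ≥ w
              have hyw : w ≤ y := by omega
              rcases Nat.eq_or_lt_of_le hyw with hy3 | hy3
              · exact hxnB (ht _ _ _ hEuw (by rw [hy3]; exact hs _ _ hExy))
              · -- y > w : crossing w' x w y
                have : E w' x := hnc w' x w y hx1 hx2 hy3 hEw'w hExy
                exact hxnB (ht _ _ _ hEuw' this)
        -- R-closed
        have hRclosed : ∀ x, w < x → x ≤ v → ∀ y, y ∈ Finset.Icc u v → E x y →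
            w < y := by
          intro x hx1 hx2 y hy hExy
          rw [Finset.mem_Icc] at hy
          have hxnB : ¬ E u x := by
            intro hEux
            rcases hmemB x (by omega) hx2 hEux with h | h <;> omega
          by_contra hcon
          push_neg at hcon
          rcases Nat.eq_or_lt_of_le hy.1 with hy1 | hy1
          · exact hxnB (by rw [hy1]; exact hs _ _ hExy)
          · rcases Nat.eq_or_lt_of_le hcon with hy2 | hy2
            · exact hxnB (ht _ _ _ hEuw (by rw [← hy2]; exact hs _ _ hExy))
            · have : E u y := hnc u y w x hy1 hy2 hx1 hEuw (hs _ _ hExy)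
              exact hxnB (ht _ _ _ this (hs _ _ hExy))
        -- subinterval class functions
        set clsL : ℕ → Finset ℕ := fun x => (Finset.Icc u w').filter (fun y => E x y)
          with hclsL
        set clsI : ℕ → Finset ℕ :=
          fun x => (Finset.Icc (w' + 1) (w - 1)).filter (fun y => E x y) with hclsI
        set clsR : ℕ → Finset ℕ := fun x => (Finset.Icc (w + 1) v).filter (fun y => E x y)
          with hclsR
        set TL := (Finset.Icc u w').image clsL with hTL
        set TI := (Finset.Icc (w' + 1) (w - 1)).image clsI with hTI
        set TR := (Finset.Icc (w + 1) v).image clsR with hTR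
        have hIHL : w' + 2 ≤ u + 2 * TL.card :=
          ih (d - 1) (by omega) u w' (by omega) huw'
            (fun x hx => hrefl x (by rw [Finset.mem_Icc] at hx ⊢; omega))
        have hIHI : (w - 1) + 2 ≤ (w' + 1) + 2 * TI.card :=
          ih (d - 1) (by omega) (w' + 1) (w - 1) (by omega) (by omega)
            (fun x hx => hrefl x (by rw [Finset.mem_Icc] at hx ⊢; omega))
        -- agreement of classes on I and R
        have hagreeI : ∀ x ∈ Finset.Icc (w' + 1) (w - 1), cls x = clsI x := by
          intro x hx
          rw [Finset.mem_Icc] at hx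
          ext y
          simp only [hcls, hclsI, Finset.mem_filter, Finset.mem_Icc]
          constructor
          · rintro ⟨hy, hExy⟩
            have := hIclosed x (by omega) (by omega) y (Finset.mem_Icc.mpr hy) hExy
            exact ⟨⟨by omega, by omega⟩, hExy⟩
          · rintro ⟨hy, hExy⟩
            exact ⟨⟨by omega, by omega⟩, hExy⟩
        have hagreeR : ∀ x ∈ Finset.Icc (w + 1) v, cls x = clsR x := by
          intro x hx
          rw [Finset.mem_Icc] at hx
          ext y
          simp only [hcls, hclsR, Finset.mem_filter, Finset.mem_Icc]
          constructor
          · rintro ⟨hy, hExy⟩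
            have := hRclosed x (by omega) (by omega) y (Finset.mem_Icc.mpr hy) hExy
            exact ⟨⟨by omega, by omega⟩, hExy⟩
          · rintro ⟨hy, hExy⟩
            exact ⟨⟨by omega, by omega⟩, hExy⟩
        set AL := (insert w (Finset.Icc u w')).image cls with hAL
        have hsplit : Finset.Icc u v =
            ((insert w (Finset.Icc u w')) ∪ Finset.Icc (w' + 1) (w - 1)) ∪
              Finset.Icc (w + 1) v := by
          ext y
          simp only [Finset.mem_Icc, Finset.mem_union, Finset.mem_insert]
          omega
        have hTeq : T = (AL ∪ TI) ∪ TR := by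
          rw [hT, hsplit, Finset.image_union, Finset.image_union]
          congr 1
          · congr 1
            exact Finset.image_congr hagreeI
          · exact Finset.image_congr hagreeR
        -- membership properties
        have hALmem : ∀ C ∈ AL, ∃ z ∈ C, z ≤ w' := by
          intro C hC
          rw [hAL, Finset.mem_image] at hC
          obtain ⟨x, hx, rfl⟩ := hC
          rw [Finset.mem_insert] at hx
          rcases hx with rfl | hx
          · exact ⟨u, Finset.mem_filter.mpr
              ⟨Finset.mem_Icc.mpr ⟨le_rfl, huv⟩, hs _ _ hEuw⟩, huw'⟩
          · rw [Finset.mem_Icc] at hx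
            exact ⟨x, Finset.mem_filter.mpr
              ⟨Finset.mem_Icc.mpr ⟨hx.1, by omega⟩, hrefl' x hx.1 (by omega)⟩, hx.2⟩
        have hTImem : ∀ C ∈ TI, (∃ z, z ∈ C) ∧ ∀ z ∈ C, w' < z ∧ z < w := by
          intro C hC
          rw [hTI, Finset.mem_image] at hC
          obtain ⟨x, hx, rfl⟩ := hC
          rw [Finset.mem_Icc] at hx
          constructor
          · exact ⟨x, Finset.mem_filter.mpr ⟨Finset.mem_Icc.mpr hx,
              hrefl' x (by omega) (by omega)⟩⟩
          · intro z hz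
            have := (Finset.mem_Icc.mp (Finset.mem_filter.mp hz).1)
            omega
        have hTRmem : ∀ C ∈ TR, (∃ z, z ∈ C) ∧ ∀ z ∈ C, w < z := by
          intro C hC
          rw [hTR, Finset.mem_image] at hC
          obtain ⟨x, hx, rfl⟩ := hC
          rw [Finset.mem_Icc] at hx
          constructor
          · exact ⟨x, Finset.mem_filter.mpr ⟨Finset.mem_Icc.mpr hx,
              hrefl' x (by omega) (by omega)⟩⟩
          · intro z hz
            have := (Finset.mem_Icc.mp (Finset.mem_filter.mp hz).1)
            omega
        have hdisj1 : Disjoint AL TI := by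
          rw [Finset.disjoint_left]
          intro C hC1 hC2
          obtain ⟨z, hz, hzle⟩ := hALmem C hC1
          have := (hTImem C hC2).2 z hz
          omega
        have hdisj2 : Disjoint (AL ∪ TI) TR := by
          rw [Finset.disjoint_left]
          intro C hC1 hC2
          rw [Finset.mem_union] at hC1
          rcases hC1 with hC1 | hC1
          · obtain ⟨z, hz, hzle⟩ := hALmem C hC1
            have := (hTRmem C hC2).2 z hz
            omega
          · obtain ⟨z, hz⟩ := (hTImem C hC1).1
            have h1 := (hTImem C hC1).2 z hz
            have h2 := (hTRmem C hC2).2 z hz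
            omega
        have hcardT : T.card = AL.card + TI.card + TR.card := by
          rw [hTeq, Finset.card_union_of_disjoint hdisj2,
            Finset.card_union_of_disjoint hdisj1]
        -- TL.card ≤ AL.card via the truncation map
        have hTLAL : TL.card ≤ AL.card := by
          have hcase1 : ∀ x ∈ Finset.Icc u w',
              (cls x).filter (fun y => y ≤ w') = clsL x := by
            intro x hx
            rw [Finset.mem_Icc] at hx
            ext y
            simp only [hcls, hclsL, Finset.mem_filter, Finset.mem_Icc]
            constructor
            · rintro ⟨⟨⟨h1, h2⟩, h3⟩, h4⟩
              exact ⟨⟨h1, h4⟩, h3⟩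
            · rintro ⟨⟨h1, h2⟩, h3⟩
              exact ⟨⟨⟨h1, by omega⟩, h3⟩, h2⟩
          have hcase2 : (cls w).filter (fun y => y ≤ w') = clsL u := by
            ext y
            simp only [hcls, hclsL, Finset.mem_filter, Finset.mem_Icc]
            constructor
            · rintro ⟨⟨⟨h1, h2⟩, h3⟩, h4⟩
              exact ⟨⟨h1, h4⟩, ht _ _ _ hEuw h3⟩
            · rintro ⟨⟨h1, h2⟩, h3⟩
              exact ⟨⟨⟨h1, by omega⟩, ht _ _ _ (hs _ _ hEuw) h3⟩, h2⟩
          have hsub : TL = AL.image (fun C => C.filter (fun y => y ≤ w')) := by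
            apply Finset.Subset.antisymm
            · intro D hD
              rw [hTL, Finset.mem_image] at hD
              obtain ⟨x, hx, rfl⟩ := hD
              rw [Finset.mem_image]
              exact ⟨cls x, Finset.mem_image_of_mem _ (Finset.mem_insert_of_mem hx),
                hcase1 x hx⟩
            · intro D hD
              rw [Finset.mem_image] at hD
              obtain ⟨C, hC, rfl⟩ := hD
              rw [hAL, Finset.mem_image] at hC
              obtain ⟨x, hx, rfl⟩ := hC
              rw [Finset.mem_insert] at hx
              rw [hTL, Finset.mem_image]
              rcases hx with hxe | hx
              · rw [hxe, hcase2]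
                exact ⟨u, Finset.mem_Icc.mpr ⟨le_rfl, huw'⟩, rfl⟩
              · rw [hcase1 x hx]
                exact ⟨x, hx, rfl⟩
          rw [hsub]
          exact Finset.card_image_le
        rcases eq_or_lt_of_le hwv with hwe | hwlt
        · have hTRempty : TR = ∅ := by
            rw [hTR]
            have : Finset.Icc (w + 1) v = ∅ := by
              apply Finset.Icc_eq_empty
              omega
            rw [this, Finset.image_empty]
          have : TR.card = 0 := by rw [hTRempty]; rfl
          omega
        · have hIHR : v + 2 ≤ (w + 1) + 2 * TR.card :=
            ih (d - 1) (by omega) (w + 1) v (by omega) (by omega)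
              (fun x hx => hrefl x (by rw [Finset.mem_Icc] at hx ⊢; omega))
          omega



theorem stmt4' (n : ℕ) (P : Finpartition (Finset.Icc 1 (2 * n + 1)))
    (hNC : ∀ a b c d : ℕ, a < b → b < c → c < d →
      (∃ B ∈ P.parts, a ∈ B ∧ c ∈ B) → (∃ B ∈ P.parts, b ∈ B ∧ d ∈ B) →
      (∃ B ∈ P.parts, a ∈ B ∧ b ∈ B))
    (hNCons : ∀ i : ℕ, ¬ ∃ B ∈ P.parts, i ∈ B ∧ i + 1 ∈ B)
    (hcard : P.parts.card = n + 1)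
    (myLB : ∀ (E : ℕ → ℕ → Prop),
      (∀ a b, E a b → E b a) → (∀ a b c, E a b → E b c → E a c) →
      (∀ a b c d : ℕ, a < b → b < c → c < d → E a c → E b d → E a b) →
      (∀ i, ¬ E i (i + 1)) →
      ∀ d u v, v ≤ u + d → u ≤ v →
        (∀ x, x ∈ Finset.Icc u v → E x x) →
        v + 2 ≤ u + 2 * ((Finset.Icc u v).image
          (fun x => (Finset.Icc u v).filter (fun y => E x y))).card)
    (B : Finset ℕ) (hB : B ∈ P.parts)
    (b b' : ℕ) (hb : b ∈ B) (hb' : b' ∈ B) (hlt : b < b')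
    (hbetween : ∀ x ∈ B, ¬ (b < x ∧ x < b')) :
    Even (b' - b) := by
  by_contra hodd
  rw [Nat.not_even_iff] at hodd
  obtain ⟨E, hE⟩ : ∃ E : ℕ → ℕ → Prop, ∀ a c, E a c ↔ ∃ C ∈ P.parts, a ∈ C ∧ c ∈ C :=
    ⟨fun a c => ∃ C ∈ P.parts, a ∈ C ∧ c ∈ C, fun a c => Iff.rfl⟩
  have hEsymm : ∀ a c, E a c → E c a := by
    intro a c h
    rw [hE] at h ⊢
    obtain ⟨C, hC, h1, h2⟩ := h
    exact ⟨C, hC, h2, h1⟩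
  have hEtrans : ∀ a c e, E a c → E c e → E a e := by
    intro a c e h1 h2
    rw [hE] at h1 h2 ⊢
    obtain ⟨C, hC, g1, g2⟩ := h1
    obtain ⟨D, hD, g3, g4⟩ := h2
    rw [P.eq_of_mem_parts hD hC g3 g2] at g4
    exact ⟨C, hC, g1, g4⟩
  have hENC : ∀ a c e f : ℕ, a < c → c < e → e < f → E a e → E c f → E a c := by
    intro a c e f h1 h2 h3 h4 h5
    rw [hE] at h4 h5 ⊢
    exact hNC _ _ _ _ h1 h2 h3 h4 h5
  have hENCons : ∀ i, ¬ E i (i + 1) := by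
    intro i hi
    rw [hE] at hi
    exact hNCons i hi
  have hbb' : E b b' := (hE _ _).mpr ⟨B, hB, hb, hb'⟩
  have hbmem := Finset.mem_Icc.mp (P.le hB hb)
  have hb'mem := Finset.mem_Icc.mp (P.le hB hb')
  -- nothing of B strictly between b and b'
  have hnotmid : ∀ x, b < x → x < b' → ¬ E b x := by
    intro x h1 h2 hEx
    rw [hE] at hEx
    obtain ⟨C, hC, h3, h4⟩ := hEx
    rw [P.eq_of_mem_parts hC hB h3 hb] at h4
    exact hbetween x h4 ⟨h1, h2⟩
  have hd1 : b + 1 < b' := by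
    rcases Nat.lt_or_ge (b + 1) b' with h1 | h1
    · exact h1
    · exfalso
      have hbe : b' = b + 1 := by omega
      rw [hbe] at hbb'
      exact hENCons b hbb'
  have hD3 : b + 3 ≤ b' := by omega
  -- closure of the open interval (b, b')
  have hclosure : ∀ x, b < x → x < b' → ∀ z, E x z → (b < z ∧ z < b') := by
    intro x hx1 hx2 z hExz
    by_contra hcon
    push_neg at hcon
    rcases Nat.lt_or_ge z b with hz | hz
    · have h1 : E z b := hENC z b x b' hz hx1 hx2 (hEsymm _ _ hExz) hbb'
      exact hnotmid x hx1 hx2 (hEtrans _ _ _ (hEsymm _ _ h1) (hEsymm _ _ hExz))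
    · rcases Nat.eq_or_lt_of_le hz with hz1 | hz1
      · exact hnotmid x hx1 hx2 (by rw [hz1]; exact hEsymm _ _ hExz)
      · have hzb' : b' ≤ z := hcon hz1
        rcases Nat.eq_or_lt_of_le hzb' with hz2 | hz2
        · exact hnotmid x hx1 hx2 (hEtrans _ _ _ hbb' (by rw [hz2]; exact hEsymm _ _ hExz))
        · have : E b x := hENC b x b' z hx1 hx2 hz2 hbb' hExz
          exact hnotmid x hx1 hx2 this
  -- reflexivity on the interior interval
  have hreflJ : ∀ x, x ∈ Finset.Icc (b + 1) (b' - 1) → E x x := by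
    intro x hx
    rw [Finset.mem_Icc] at hx
    obtain ⟨C, hC, hxC⟩ := P.exists_mem
      (Finset.mem_Icc.mpr (⟨by omega, by omega⟩ : 1 ≤ x ∧ x ≤ 2 * n + 1))
    exact (hE _ _).mpr ⟨C, hC, hxC, hxC⟩
  have hIn := myLB E hEsymm hEtrans hENC hENCons (2 * n + 1) (b + 1) (b' - 1)
    (by omega) (by omega) hreflJ
  -- the contraction map and relation
  obtain ⟨ψ, hψ⟩ : ∃ ψ : ℕ → ℕ, ∀ x, ψ x = if x ≤ b then x else x + (b' - b) :=
    ⟨_, fun _ => rfl⟩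
  obtain ⟨E2, hE2⟩ : ∃ E2 : ℕ → ℕ → Prop, ∀ x y, E2 x y ↔ E (ψ x) (ψ y) :=
    ⟨_, fun _ _ => Iff.rfl⟩
  have hψid : ∀ i, i ≤ b → ψ i = i := by
    intro i hi
    rw [hψ i, if_pos hi]
  have hψsucc : ∀ i, b < i → ψ i = i + (b' - b) := by
    intro i hi
    rw [hψ i, if_neg (by omega)]
  have hE2symm : ∀ a c, E2 a c → E2 c a := by
    intro a c hac
    rw [hE2] at hac ⊢
    exact hEsymm _ _ hac
  have hE2trans : ∀ a c e, E2 a c → E2 c e → E2 a e := by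
    intro a c e h1 h2
    rw [hE2] at h1 h2 ⊢
    exact hEtrans _ _ _ h1 h2
  have hψmono : ∀ x y, x < y → ψ x < ψ y := by
    intro x y hxy
    rw [hψ x, hψ y]
    split_ifs <;> omega
  have hE2nc : ∀ a c e f : ℕ, a < c → c < e → e < f → E2 a e → E2 c f → E2 a c := by
    intro a c e f h1 h2 h3 h4 h5
    rw [hE2] at h4 h5 ⊢
    exact hENC (ψ a) (ψ c) (ψ e) (ψ f) (hψmono _ _ h1) (hψmono _ _ h2) (hψmono _ _ h3) h4 h5
  have hE2nocon : ∀ i, ¬ E2 i (i + 1) := by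
    intro i hEi
    rw [hE2] at hEi
    by_cases h1 : i + 1 ≤ b
    · rw [hψid i (by omega), hψid (i + 1) h1] at hEi
      exact hENCons i hEi
    · by_cases h2 : i ≤ b
      · have hib : i = b := by omega
        rw [hψid i h2, hψsucc (i + 1) (by omega), hib] at hEi
        have he : b + 1 + (b' - b) = b' + 1 := by omega
        rw [he] at hEi
        exact hENCons b' (hEtrans _ _ _ (hEsymm _ _ hbb') hEi)
      · rw [hψsucc i (by omega), hψsucc (i + 1) (by omega)] at hEi
        have he : i + 1 + (b' - b) = (i + (b' - b)) + 1 := by omega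
        rw [he] at hEi
        exact hENCons _ hEi
  have hψg : ∀ x, 1 ≤ x → x ≤ 2 * n + 1 - (b' - b) → ψ x ∈ Finset.Icc 1 (2 * n + 1) := by
    intro x h1 h2
    rw [hψ x, Finset.mem_Icc]
    split_ifs <;> omega
  have hrefl2 : ∀ x, x ∈ Finset.Icc 1 (2 * n + 1 - (b' - b)) → E2 x x := by
    intro x hx
    rw [Finset.mem_Icc] at hx
    obtain ⟨C, hC, hxC⟩ := P.exists_mem (hψg x hx.1 hx.2)
    rw [hE2]
    exact (hE _ _).mpr ⟨C, hC, hxC, hxC⟩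
  have hOut := myLB E2 hE2symm hE2trans hE2nc hE2nocon (2 * n + 1) 1
    (2 * n + 1 - (b' - b)) (by omega) (by omega) hrefl2
  -- every ground filter is a part
  have hpartfilter : ∀ z, z ∈ Finset.Icc 1 (2 * n + 1) →
      (Finset.Icc 1 (2 * n + 1)).filter (fun y => E z y) ∈ P.parts ∧
        z ∈ (Finset.Icc 1 (2 * n + 1)).filter (fun y => E z y) := by
    intro z hz
    obtain ⟨C, hC, hzC⟩ := P.exists_mem hz
    have hfe : (Finset.Icc 1 (2 * n + 1)).filter (fun y => E z y) = C := by
      ext y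
      rw [Finset.mem_filter]
      constructor
      · rintro ⟨hy1, hEzy⟩
        obtain ⟨D, hD, h3, h4⟩ := (hE _ _).mp hEzy
        rw [P.eq_of_mem_parts hD hC h3 hzC] at h4
        exact h4
      · intro hy
        exact ⟨P.le hC hy, (hE _ _).mpr ⟨C, hC, hzC, hy⟩⟩
    rw [hfe]
    exact ⟨hC, hzC⟩
  -- interior classes are parts
  have hF1parts : (Finset.Icc (b + 1) (b' - 1)).image
      (fun x => (Finset.Icc (b + 1) (b' - 1)).filter (fun y => E x y)) ⊆ P.parts := by
    intro C hC
    rw [Finset.mem_image] at hC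
    obtain ⟨x, hx, rfl⟩ := hC
    rw [Finset.mem_Icc] at hx
    have hxg : x ∈ Finset.Icc 1 (2 * n + 1) := Finset.mem_Icc.mpr ⟨by omega, by omega⟩
    have heq : (Finset.Icc (b + 1) (b' - 1)).filter (fun y => E x y) =
        (Finset.Icc 1 (2 * n + 1)).filter (fun y => E x y) := by
      ext y
      simp only [Finset.mem_filter, Finset.mem_Icc]
      constructor
      · rintro ⟨hy, hExy⟩
        exact ⟨⟨by omega, by omega⟩, hExy⟩
      · rintro ⟨hy, hExy⟩
        have := hclosure x (by omega) (by omega) y hExy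
        exact ⟨⟨by omega, by omega⟩, hExy⟩
    rw [heq]
    exact (hpartfilter x hxg).1
  -- interior classes live strictly between b and b'
  have hF1between : ∀ C ∈ (Finset.Icc (b + 1) (b' - 1)).image
      (fun x => (Finset.Icc (b + 1) (b' - 1)).filter (fun y => E x y)),
      ∀ z ∈ C, b < z ∧ z < b' := by
    intro C hC z hz
    rw [Finset.mem_image] at hC
    obtain ⟨x, hx, rfl⟩ := hC
    have := Finset.mem_Icc.mp (Finset.mem_filter.mp hz).1
    omega
  set g : Finset ℕ → Finset ℕ :=
    fun C => (Finset.Icc 1 (2 * n + 1)).filter (fun z => ∃ x ∈ C, E (ψ x) z) with hg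
  have hgeq : ∀ x0 ∈ Finset.Icc 1 (2 * n + 1 - (b' - b)),
      g ((Finset.Icc 1 (2 * n + 1 - (b' - b))).filter (fun y => E2 x0 y)) =
        (Finset.Icc 1 (2 * n + 1)).filter (fun z => E (ψ x0) z) := by
    intro x0 hx0
    simp only [hg]
    ext z
    simp only [Finset.mem_filter]
    constructor
    · rintro ⟨hz, x, hx, hExz⟩
      have hE2x : E2 x0 x := hx.2
      rw [hE2] at hE2x
      exact ⟨hz, hEtrans _ _ _ hE2x hExz⟩
    · rintro ⟨hz, hExz⟩
      exact ⟨hz, x0, ⟨hx0, hrefl2 x0 hx0⟩, hExz⟩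
  have hψmem : ∀ x0 ∈ Finset.Icc 1 (2 * n + 1 - (b' - b)),
      ψ x0 ∈ (Finset.Icc 1 (2 * n + 1)).filter (fun z => E (ψ x0) z) := by
    intro x0 hx0
    rw [Finset.mem_Icc] at hx0
    refine Finset.mem_filter.mpr ⟨hψg x0 hx0.1 hx0.2, ?_⟩
    have := hrefl2 x0 (Finset.mem_Icc.mpr hx0)
    rw [hE2] at this
    exact this
  have hinj : Set.InjOn g ((Finset.Icc 1 (2 * n + 1 - (b' - b))).image
      (fun x => (Finset.Icc 1 (2 * n + 1 - (b' - b))).filter (fun y => E2 x y)) :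
        Finset (Finset ℕ)) := by
    intro C1 hC1 C2 hC2 hgeq12
    rw [Finset.coe_image, Set.mem_image] at hC1 hC2
    obtain ⟨x1, hx1, rfl⟩ := hC1
    obtain ⟨x2, hx2, rfl⟩ := hC2
    rw [Finset.mem_coe] at hx1 hx2
    rw [hgeq x1 hx1, hgeq x2 hx2] at hgeq12
    have h1 : ψ x1 ∈ (Finset.Icc 1 (2 * n + 1)).filter (fun z => E (ψ x2) z) := by
      rw [← hgeq12]
      exact hψmem x1 hx1
    have hE21 : E2 x2 x1 := by
      rw [hE2]
      exact (Finset.mem_filter.mp h1).2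
    ext y
    simp only [Finset.mem_filter]
    constructor
    · rintro ⟨hy, hE2y⟩
      exact ⟨hy, hE2trans _ _ _ hE21 hE2y⟩
    · rintro ⟨hy, hE2y⟩
      exact ⟨hy, hE2trans _ _ _ (hE2symm _ _ hE21) hE2y⟩
  have hF2gparts : (((Finset.Icc 1 (2 * n + 1 - (b' - b))).image
      (fun x => (Finset.Icc 1 (2 * n + 1 - (b' - b))).filter (fun y => E2 x y))).image g)
        ⊆ P.parts := by
    intro C hC
    rw [Finset.mem_image] at hC
    obtain ⟨D, hD, rfl⟩ := hC
    rw [Finset.mem_image] at hD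
    obtain ⟨x, hx, rfl⟩ := hD
    rw [hgeq x hx]
    rw [Finset.mem_Icc] at hx
    exact (hpartfilter (ψ x) (hψg x hx.1 hx.2)).1
  have hψnotmid : ∀ x, ¬ (b < ψ x ∧ ψ x < b') := by
    intro x
    rw [hψ x]
    split_ifs <;> omega
  have hdisj : Disjoint ((Finset.Icc (b + 1) (b' - 1)).image
      (fun x => (Finset.Icc (b + 1) (b' - 1)).filter (fun y => E x y)))
      (((Finset.Icc 1 (2 * n + 1 - (b' - b))).image
        (fun x => (Finset.Icc 1 (2 * n + 1 - (b' - b))).filter (fun y => E2 x y))).image g) := by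
    rw [Finset.disjoint_left]
    intro C hC1 hC2
    rw [Finset.mem_image] at hC2
    obtain ⟨D, hD, hDe⟩ := hC2
    rw [Finset.mem_image] at hD
    obtain ⟨x, hx, rfl⟩ := hD
    have hmem : ψ x ∈ C := by
      rw [← hDe, hgeq x hx]
      exact hψmem x hx
    exact hψnotmid x (hF1between C hC1 (ψ x) hmem)
  have hcardg : (((Finset.Icc 1 (2 * n + 1 - (b' - b))).image
      (fun x => (Finset.Icc 1 (2 * n + 1 - (b' - b))).filter (fun y => E2 x y))).image g).card
      = ((Finset.Icc 1 (2 * n + 1 - (b' - b))).image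
        (fun x => (Finset.Icc 1 (2 * n + 1 - (b' - b))).filter (fun y => E2 x y))).card :=
    Finset.card_image_of_injOn hinj
  have hunion := Finset.card_union_of_disjoint hdisj
  have hle : (((Finset.Icc (b + 1) (b' - 1)).image
      (fun x => (Finset.Icc (b + 1) (b' - 1)).filter (fun y => E x y))) ∪
      (((Finset.Icc 1 (2 * n + 1 - (b' - b))).image
        (fun x => (Finset.Icc 1 (2 * n + 1 - (b' - b))).filter (fun y => E2 x y))).image g)).card
      ≤ P.parts.card :=
    Finset.card_le_card (Finset.union_subset hF1parts hF2gparts)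
  rw [hcard] at hle
  omega

theorem stmt4 (n : ℕ) (P : Finpartition (Finset.Icc 1 (2 * n + 1)))
    (h : SpecialPartition n P) (B : Finset ℕ) (hB : B ∈ P.parts)
    (b b' : ℕ) (hb : b ∈ B) (hb' : b' ∈ B) (hlt : b < b')
    (hbetween : ∀ x ∈ B, ¬ (b < x ∧ x < b')) :
    Even (b' - b) := by
  obtain ⟨hNC, hNCons, hcard⟩ := h
  exact stmt4' n P hNC hNCons hcard myLB B hB b b' hb hb' hlt hbetween
end

section
/- Let π be a special partition of [2n+1] and let b < b' be consecutive entries of a block with b' - b = 2k. Then the elements b+1, b+2, ..., b'-1 are partitioned by the blocks of π into exactly k blocks, each of which is entirely contained in the interval {b+1, ..., b'-1}. -/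
open scoped Classical

def SBQ (Q : Finset (Finset ℕ)) (x y : ℕ) : Prop := ∃ K ∈ Q, x ∈ K ∧ y ∈ K

lemma arc_lemma (Q : Finset (Finset ℕ)) (a c : ℕ) (hac : a ≤ c)
    (hsub : ∀ K ∈ Q, K ⊆ Finset.Icc a c)
    (hcov : ∀ x ∈ Finset.Icc a c, ∃ K ∈ Q, x ∈ K)
    (hne : ∀ K ∈ Q, K.Nonempty)
    (hdisj : ∀ K ∈ Q, ∀ L ∈ Q, ∀ x : ℕ, x ∈ K → x ∈ L → K = L)
    (hnc : ∀ p q r s : ℕ, p < q → q < r → r < s → SBQ Q p r → SBQ Q q s → SBQ Q p q)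
    (hnocons : ∀ i : ℕ, ¬ SBQ Q i (i+1)) :
    (Finset.Icc a c).card + 1 ≤ 2 * Q.card := by
  classical
  obtain ⟨A, hA, haA⟩ := hcov a (by simp [hac])
  -- E : maxima of blocks
  have hEQ : Q.card = ((Finset.Icc a c).filter (fun x => ¬ ∃ y, SBQ Q x y ∧ x < y)).card := by
    apply Finset.card_bij (fun K hK => K.max' (hne K hK))
    · intro K hK
      have hmem : K.max' (hne K hK) ∈ K := K.max'_mem _
      rw [Finset.mem_filter]
      refine ⟨hsub K hK hmem, ?_⟩
      rintro ⟨y, ⟨L, hL, hxL, hyL⟩, hxy⟩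
      have hLK : L = K := hdisj L hL K hK _ hxL hmem
      subst hLK
      exact absurd (L.le_max' y hyL) (by omega)
    · intro K hK L hL hEq
      have h1 : K.max' (hne K hK) ∈ K := K.max'_mem _
      have h2 : K.max' (hne K hK) ∈ L := hEq ▸ L.max'_mem _
      exact hdisj K hK L hL _ h1 h2
    · intro x hx
      rw [Finset.mem_filter] at hx
      obtain ⟨hx1, hx2⟩ := hx
      obtain ⟨K, hK, hxK⟩ := hcov x hx1
      refine ⟨K, hK, ?_⟩
      have hle : x ≤ K.max' (hne K hK) := K.le_max' x hxK
      rcases eq_or_lt_of_le hle with heq | hlt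
      · exact heq.symm
      · exact absurd ⟨K.max' (hne K hK), ⟨K, hK, hxK, K.max'_mem _⟩, hlt⟩ hx2
  -- injection from D into Q.erase A
  set f : ℕ → Finset ℕ := fun x => if h : ∃ K ∈ Q, x + 1 ∈ K then h.choose else ∅ with hf
  have hfspec : ∀ x : ℕ, (∃ K ∈ Q, x + 1 ∈ K) → f x ∈ Q ∧ x + 1 ∈ f x := by
    intro x hx
    rw [hf]
    simp only [dif_pos hx]
    exact ⟨hx.choose_spec.1, hx.choose_spec.2⟩
  have hDmem : ∀ x ∈ (Finset.Icc a c).filter (fun x => ∃ y, SBQ Q x y ∧ x < y),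
      x + 1 ∈ Finset.Icc a c ∧ f x ∈ Q ∧ x + 1 ∈ f x := by
    intro x hx
    rw [Finset.mem_filter] at hx
    obtain ⟨hx1, y, ⟨K, hK, hxK, hyK⟩, hxy⟩ := hx
    have hyc : y ≤ c := (Finset.mem_Icc.1 (hsub K hK hyK)).2
    have hx1c : x + 1 ∈ Finset.Icc a c := by
      rw [Finset.mem_Icc] at hx1 ⊢; omega
    obtain ⟨K', hK', hK''⟩ := hcov (x+1) hx1c
    exact ⟨hx1c, hfspec x ⟨K', hK', hK''⟩⟩
  have hDcard : ((Finset.Icc a c).filter (fun x => ∃ y, SBQ Q x y ∧ x < y)).card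
      ≤ (Q.erase A).card := by
    apply Finset.card_le_card_of_injOn f
    · intro x hx
      obtain ⟨hx1c, hfQ, hxf⟩ := hDmem x hx
      rw [Finset.mem_coe, Finset.mem_filter] at hx
      obtain ⟨hx1, y, ⟨K, hK, hxK, hyK⟩, hxy⟩ := hx
      rw [Finset.mem_coe, Finset.mem_erase]
      refine ⟨?_, hfQ⟩
      intro hfA
      have hx1A : x + 1 ∈ A := hfA ▸ hxf
      -- x ∉ A
      have hxA : x ∉ A := by
        intro hxA
        exact hnocons x ⟨A, hA, hxA, hx1A⟩
      have hax : a < x := by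
        have : a ≤ x := (Finset.mem_Icc.1 hx1).1
        rcases eq_or_lt_of_le this with heq | hlt
        · exact absurd (heq ▸ haA) hxA
        · exact hlt
      have hyx1 : x + 1 < y := by
        rcases Nat.lt_or_ge (x+1) y with hh | hh
        · exact hh
        · have hy : y = x + 1 := by omega
          exact absurd ⟨K, hK, hxK, hy ▸ hyK⟩ (hnocons x)
      obtain ⟨L, hL, haL, hxL⟩ := hnc a x (x+1) y hax (Nat.lt_succ_self x) hyx1
        ⟨A, hA, haA, hx1A⟩ ⟨K, hK, hxK, hyK⟩
      have : L = A := hdisj L hL A hA a haL haA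
      exact hxA (this ▸ hxL)
    · -- injectivity
      have key : ∀ x ∈ (Finset.Icc a c).filter (fun x => ∃ y, SBQ Q x y ∧ x < y),
          ∀ z ∈ (Finset.Icc a c).filter (fun x => ∃ y, SBQ Q x y ∧ x < y),
          x < z → f x ≠ f z := by
        intro x hx z hz hxz hEq
        obtain ⟨_, hfxQ, hx1f⟩ := hDmem x hx
        obtain ⟨_, hfzQ, hz1f⟩ := hDmem z hz
        rw [hEq] at hx1f hfxQ
        -- now x+1, z+1 ∈ f z ∈ Q
        rcases Nat.lt_or_ge (x+1) z with hlt | hge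
        case inr =>
          have hzeq : z = x + 1 := by omega
          subst hzeq
          exact hnocons (x+1) ⟨f (x+1), hfzQ, hx1f, hz1f⟩
        case inl =>
          rw [Finset.mem_filter] at hz
          obtain ⟨hz1, w, ⟨L, hL, hzL, hwL⟩, hzw⟩ := hz
          have hzw1 : z + 1 < w := by
            rcases Nat.lt_or_ge (z+1) w with hh | hh
            · exact hh
            · have hw : w = z + 1 := by omega
              exact absurd ⟨L, hL, hzL, hw ▸ hwL⟩ (hnocons z)
          obtain ⟨M, hM, hx1M, hzM⟩ := hnc (x+1) z (z+1) w hlt (Nat.lt_succ_self z) hzw1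
            ⟨f z, hfzQ, hx1f, hz1f⟩ ⟨L, hL, hzL, hwL⟩
          have hMfz : M = f z := hdisj M hM (f z) hfzQ (x+1) hx1M hx1f
          exact hnocons z ⟨f z, hfzQ, hMfz ▸ hzM, hz1f⟩
      intro x hx z hz hEq
      rcases lt_trichotomy x z with hlt | heq | hgt
      · exact absurd hEq (key x hx z hz hlt)
      · exact heq
      · exact absurd hEq.symm (key z hz x hx hgt)
  have hsplit := Finset.card_filter_add_card_filter_not
    (s := Finset.Icc a c) (p := fun x => ∃ y, SBQ Q x y ∧ x < y)
  have herase := Finset.card_erase_add_one hA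
  omega



theorem stmt5 (n : ℕ) (P : Finpartition (Finset.Icc 1 (2 * n + 1)))
    (h : SpecialPartition n P) (B : Finset ℕ) (hB : B ∈ P.parts)
    (b b' k : ℕ) (hb : b ∈ B) (hb' : b' ∈ B) (hlt : b < b')
    (hbetween : ∀ x ∈ B, ¬ (b < x ∧ x < b'))
    (hk : b' - b = 2 * k) :
    (P.parts.filter (fun C => ∃ x ∈ C, b < x ∧ x < b')).card = k ∧
    (∀ C ∈ P.parts, (∃ x ∈ C, b < x ∧ x < b') → ∀ x ∈ C, b < x ∧ x < b') := by
  classical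
  obtain ⟨hncP, hnoconsP, hcardP⟩ := h
  have hbI := Finset.mem_Icc.1 (P.le hB hb)
  have hb'I := Finset.mem_Icc.1 (P.le hB hb')
  have hk1 : 1 ≤ k := by omega
  have hb'eq : b' = b + 2 * k := by omega
  have hkn : k ≤ n := by omega
  have hpne : ∀ K ∈ P.parts, K.Nonempty := by
    intro K hK
    rw [Finset.nonempty_iff_ne_empty]
    intro hemp
    exact P.bot_notMem (by rw [Finset.bot_eq_empty, ← hemp]; exact hK)
  -- Part 2
  have part2 : ∀ C ∈ P.parts, (∃ x ∈ C, b < x ∧ x < b') → ∀ x ∈ C, b < x ∧ x < b' := by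
    rintro C hC ⟨x, hxC, hbx, hxb'⟩ y hyC
    by_contra hy
    have hCB : C = B → False := by
      intro hCB
      exact hbetween x (hCB ▸ hxC) ⟨hbx, hxb'⟩
    have hyout : y ≤ b ∨ b' ≤ y := by omega
    rcases hyout with hyb | hyb
    · rcases eq_or_lt_of_le hyb with heq | hlt2
      · exact hCB (P.eq_of_mem_parts hC hB hyC (heq ▸ hb))
      · obtain ⟨M, hM, hyM, hbM⟩ := hncP y b x b' hlt2 hbx hxb'
          ⟨C, hC, hyC, hxC⟩ ⟨B, hB, hb, hb'⟩
        have h1 : M = C := P.eq_of_mem_parts hM hC hyM hyC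
        have h2 : M = B := P.eq_of_mem_parts hM hB hbM hb
        exact hCB (h1 ▸ h2)
    · rcases eq_or_lt_of_le hyb with heq | hlt2
      · exact hCB (P.eq_of_mem_parts hC hB hyC (heq ▸ hb'))
      · obtain ⟨M, hM, hbM, hxM⟩ := hncP b x b' y hbx hxb' hlt2
          ⟨B, hB, hb, hb'⟩ ⟨C, hC, hxC, hyC⟩
        have h1 : M = B := P.eq_of_mem_parts hM hB hbM hb
        have h2 : M = C := P.eq_of_mem_parts hM hC hxM hxC
        exact hCB (h2 ▸ h1)
  refine ⟨?_, part2⟩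
  set Qin := P.parts.filter (fun C => ∃ x ∈ C, b < x ∧ x < b') with hQin
  set Qout := P.parts.filter (fun C => ¬ ∃ x ∈ C, b < x ∧ x < b') with hQout
  have hsplitcard : Qin.card + Qout.card = n + 1 := by
    rw [hQin, hQout, Finset.card_filter_add_card_filter_not, hcardP]
  have houtmem : ∀ K ∈ Qout, K ∈ P.parts ∧ ∀ z ∈ K, (1 ≤ z ∧ z ≤ 2*n+1) ∧ (z ≤ b ∨ b' ≤ z) := by
    intro K hK
    rw [hQout, Finset.mem_filter] at hK
    refine ⟨hK.1, fun z hz => ⟨Finset.mem_Icc.1 (P.le hK.1 hz), ?_⟩⟩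
    have := hK.2
    push_neg at this
    have := this z hz
    omega
  have hinmem : ∀ K ∈ Qin, K ∈ P.parts ∧ ∀ z ∈ K, b < z ∧ z < b' := by
    intro K hK
    rw [hQin, Finset.mem_filter] at hK
    exact ⟨hK.1, part2 K hK.1 hK.2⟩
  -- Lower bound on Qin.card
  have hlow : k ≤ Qin.card := by
    have := arc_lemma Qin (b+1) (b'-1) (by omega)
      (by
        intro K hK z hz
        have := (hinmem K hK).2 z hz
        rw [Finset.mem_Icc]; omega)
      (by
        intro x hx
        rw [Finset.mem_Icc] at hx
        obtain ⟨K, hK, hxK⟩ := P.exists_mem (Finset.mem_Icc.2 (by omega) : x ∈ Finset.Icc 1 (2*n+1))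
        exact ⟨K, by rw [hQin, Finset.mem_filter]; exact ⟨hK, x, hxK, by omega⟩, hxK⟩)
      (fun K hK => hpne K (hinmem K hK).1)
      (fun K hK L hL x hxK hxL => P.eq_of_mem_parts (hinmem K hK).1 (hinmem L hL).1 hxK hxL)
      (by
        rintro p q r s hpq hqr hrs ⟨K, hK, hpK, hrK⟩ ⟨L, hL, hqL, hsL⟩
        obtain ⟨M, hM, hpM, hqM⟩ := hncP p q r s hpq hqr hrs
          ⟨K, (hinmem K hK).1, hpK, hrK⟩ ⟨L, (hinmem L hL).1, hqL, hsL⟩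
        have hMK : M = K := P.eq_of_mem_parts hM (hinmem K hK).1 hpM hpK
        exact ⟨K, hK, hpK, hMK ▸ hqM⟩)
      (by
        rintro i ⟨K, hK, hiK, hi1K⟩
        exact hnoconsP i ⟨K, (hinmem K hK).1, hiK, hi1K⟩)
    rw [Nat.card_Icc] at this
    omega
  -- Upper bound via Qout
  set g : ℕ → ℕ := fun x => if x < b' then x else x - 2*k with hgdef
  have hg : ∀ z : ℕ, (z ≤ b ∨ b' ≤ z) → (z ≤ b ∧ g z = z) ∨ (b' ≤ z ∧ g z = z - 2*k) := by
    intro z hz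
    rcases hz with hz | hz
    · exact Or.inl ⟨hz, if_pos (by omega)⟩
    · exact Or.inr ⟨hz, if_neg (by omega)⟩
  set Q' := Qout.image (Finset.image g) with hQ'
  have hQ'card : Q'.card ≤ Qout.card := Finset.card_image_le
  have hhigh : n + 1 - k ≤ Qout.card := by
    have := arc_lemma Q' 1 (2*n+1-2*k) (by omega)
      (by
        rintro K' hK' z' hz'
        obtain ⟨K, hK, rfl⟩ := Finset.mem_image.1 hK'
        obtain ⟨z, hzK, rfl⟩ := Finset.mem_image.1 hz'
        have hzb := (houtmem K hK).2 z hzK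
        rcases hg z hzb.2 with ⟨h1, h2⟩ | ⟨h1, h2⟩ <;> rw [Finset.mem_Icc, h2] <;> omega)
      (by
        intro y hy
        rw [Finset.mem_Icc] at hy
        by_cases hyb : y ≤ b
        · obtain ⟨K, hK, hyK⟩ := P.exists_mem (Finset.mem_Icc.2 (by omega) : y ∈ Finset.Icc 1 (2*n+1))
          have hKout : K ∈ Qout := by
            rw [hQout, Finset.mem_filter]
            refine ⟨hK, fun hex => ?_⟩
            have := part2 K hK hex y hyK
            omega
          exact ⟨Finset.image g K, Finset.mem_image_of_mem _ hKout,
            Finset.mem_image.2 ⟨y, hyK, if_pos (by omega)⟩⟩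
        · obtain ⟨K, hK, hyK⟩ := P.exists_mem
            (Finset.mem_Icc.2 (by omega) : y + 2*k ∈ Finset.Icc 1 (2*n+1))
          have hKout : K ∈ Qout := by
            rw [hQout, Finset.mem_filter]
            refine ⟨hK, fun hex => ?_⟩
            have := part2 K hK hex (y + 2*k) hyK
            omega
          exact ⟨Finset.image g K, Finset.mem_image_of_mem _ hKout,
            Finset.mem_image.2 ⟨y + 2*k, hyK, by rw [hgdef]; simp only []; rw [if_neg (by omega)]; omega⟩⟩)
      (by
        rintro K' hK'
        obtain ⟨K, hK, rfl⟩ := Finset.mem_image.1 hK'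
        exact (hpne K (houtmem K hK).1).image g)
      (by
        rintro K' hK' L' hL' y hyK' hyL'
        obtain ⟨K, hK, rfl⟩ := Finset.mem_image.1 hK'
        obtain ⟨L, hL, rfl⟩ := Finset.mem_image.1 hL'
        obtain ⟨x1, hx1K, hx1⟩ := Finset.mem_image.1 hyK'
        obtain ⟨x2, hx2L, hx2⟩ := Finset.mem_image.1 hyL'
        have hb1 := (houtmem K hK).2 x1 hx1K
        have hb2 := (houtmem L hL).2 x2 hx2L
        have hKL : K = L := by
          have hcases : x1 = x2 ∨ (x1 = b ∧ x2 = b') ∨ (x1 = b' ∧ x2 = b) := by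
            rcases hg x1 hb1.2 with ⟨u1, v1⟩ | ⟨u1, v1⟩ <;>
              rcases hg x2 hb2.2 with ⟨u2, v2⟩ | ⟨u2, v2⟩ <;> omega
          rcases hcases with heq | ⟨h1, h2⟩ | ⟨h1, h2⟩
          · exact P.eq_of_mem_parts (houtmem K hK).1 (houtmem L hL).1 hx1K (heq ▸ hx2L)
          · have e1 : K = B := P.eq_of_mem_parts (houtmem K hK).1 hB (h1 ▸ hx1K) hb
            have e2 : L = B := P.eq_of_mem_parts (houtmem L hL).1 hB (h2 ▸ hx2L) hb'
            rw [e1, e2]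
          · have e1 : K = B := P.eq_of_mem_parts (houtmem K hK).1 hB (h1 ▸ hx1K) hb'
            have e2 : L = B := P.eq_of_mem_parts (houtmem L hL).1 hB (h2 ▸ hx2L) hb
            rw [e1, e2]
        rw [hKL])
      (by
        rintro p q r s hpq hqr hrs ⟨K', hK', hpK', hrK'⟩ ⟨L', hL', hqL', hsL'⟩
        obtain ⟨K, hK, rfl⟩ := Finset.mem_image.1 hK'
        obtain ⟨L, hL, rfl⟩ := Finset.mem_image.1 hL'
        obtain ⟨xp, hxpK, hxp⟩ := Finset.mem_image.1 hpK'
        obtain ⟨xr, hxrK, hxr⟩ := Finset.mem_image.1 hrK'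
        obtain ⟨xq, hxqL, hxq⟩ := Finset.mem_image.1 hqL'
        obtain ⟨xs, hxsL, hxs⟩ := Finset.mem_image.1 hsL'
        have bp := ((houtmem K hK).2 xp hxpK)
        have br := ((houtmem K hK).2 xr hxrK)
        have bq := ((houtmem L hL).2 xq hxqL)
        have bs := ((houtmem L hL).2 xs hxsL)
        have hmono : ∀ x y : ℕ, (x ≤ b ∨ b' ≤ x) → (y ≤ b ∨ b' ≤ y) → g x < g y → x < y := by
          intro x y hx hy hxy
          rcases hg x hx with ⟨u1, v1⟩ | ⟨u1, v1⟩ <;>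
            rcases hg y hy with ⟨u2, v2⟩ | ⟨u2, v2⟩ <;> omega
        have o1 : xp < xq := hmono _ _ bp.2 bq.2 (by omega)
        have o2 : xq < xr := hmono _ _ bq.2 br.2 (by omega)
        have o3 : xr < xs := hmono _ _ br.2 bs.2 (by omega)
        obtain ⟨M, hM, hpM, hqM⟩ := hncP xp xq xr xs o1 o2 o3
          ⟨K, (houtmem K hK).1, hxpK, hxrK⟩ ⟨L, (houtmem L hL).1, hxqL, hxsL⟩
        have hMK : M = K := P.eq_of_mem_parts hM (houtmem K hK).1 hpM hxpK
        exact ⟨Finset.image g K, hK', Finset.mem_image.2 ⟨xp, hxpK, hxp⟩,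
          Finset.mem_image.2 ⟨xq, hMK ▸ hqM, hxq⟩⟩)
      (by
        rintro i ⟨K', hK', hiK', hi1K'⟩
        obtain ⟨K, hK, rfl⟩ := Finset.mem_image.1 hK'
        obtain ⟨x, hxK, hx⟩ := Finset.mem_image.1 hiK'
        obtain ⟨y, hyK, hy⟩ := Finset.mem_image.1 hi1K'
        have bx := (houtmem K hK).2 x hxK
        have by' := (houtmem K hK).2 y hyK
        have hKp := (houtmem K hK).1
        rcases hg x bx.2 with ⟨u1, v1⟩ | ⟨u1, v1⟩ <;> rcases hg y by'.2 with ⟨u2, v2⟩ | ⟨u2, v2⟩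
        · -- both ≤ b : y = x + 1
          have : y = x + 1 := by omega
          exact hnoconsP x ⟨K, hKp, hxK, this ▸ hyK⟩
        · -- x ≤ b, y ≥ b'
          have hx' : x = b - 1 ∨ x = b := by omega
          rcases hx' with hxe | hxe
          · have hye : y = b' := by omega
            have hKB : K = B := P.eq_of_mem_parts hKp hB (hye ▸ hyK) hb'
            have hbm1 : b - 1 + 1 = b := by omega
            exact hnoconsP (b-1) ⟨B, hB, (hxe ▸ hKB ▸ hxK : b - 1 ∈ B), hbm1 ▸ hb⟩
          · have hKB : K = B := P.eq_of_mem_parts hKp hB (hxe ▸ hxK) hb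
            have hye : y = b' + 1 := by omega
            exact hnoconsP b' ⟨B, hB, hb', hye ▸ hKB ▸ hyK⟩
        · -- x ≥ b', y ≤ b : impossible
          omega
        · -- both ≥ b' : y = x + 1
          have : y = x + 1 := by omega
          exact hnoconsP x ⟨K, hKp, hxK, this ▸ hyK⟩)
    rw [Nat.card_Icc] at this
    omega
  omega
end

section
/- Let π be a special partition of [2n+1] and b < b' consecutive entries of a block of π. Then the restriction of π to the interval {b+1, ..., b'-1}, relabeled to {1, ..., b'-b-1}, is itself a special partition of [b'-b-1] (i.e., non-crossing, no block with two consecutive integers, and with (b'-b)/2 blocks). -/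
open scoped Classical

def SB (Ps : Finset (Finset ℕ)) (a b : ℕ) : Prop :=
  ∃ B ∈ Ps, a ∈ B ∧ b ∈ B

lemma contain_lem {Ps : Finset (Finset ℕ)}
    (hpd : ∀ C ∈ Ps, ∀ D ∈ Ps, ∀ x, x ∈ C → x ∈ D → C = D)
    (hnc : ∀ a b c d : ℕ, a < b → b < c → c < d → SB Ps a c → SB Ps b d → SB Ps a b)
    {C : Finset ℕ} (hC : C ∈ Ps) {p q : ℕ} (hp : p ∈ C) (hq : q ∈ C) (hpq : p < q)
    (hmid : ∀ x ∈ C, ¬ (p < x ∧ x < q))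
    {D : Finset ℕ} (hD : D ∈ Ps) {u : ℕ} (hu : u ∈ D) (hup : p < u) (huq : u < q)
    {v : ℕ} (hv : v ∈ D) : p < v ∧ v < q := by
  constructor
  · by_contra hle
    push_neg at hle
    rcases eq_or_lt_of_le hle with h | h
    · have hDC : D = C := hpd D hD C hC p (h ▸ hv) hp
      exact hmid u (hDC ▸ hu) ⟨hup, huq⟩
    · obtain ⟨E, hE, hvE, hpE⟩ := hnc v p u q h hup huq ⟨D, hD, hv, hu⟩ ⟨C, hC, hp, hq⟩
      have hED : E = D := hpd E hE D hD v hvE hv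
      have hDC : D = C := hpd D hD C hC p (hED ▸ hpE) hp
      exact hmid u (hDC ▸ hu) ⟨hup, huq⟩
  · by_contra hle
    push_neg at hle
    rcases eq_or_lt_of_le hle with h | h
    · have hDC : D = C := hpd D hD C hC q (h ▸ hv) hq
      exact hmid u (hDC ▸ hu) ⟨hup, huq⟩
    · obtain ⟨E, hE, hpE, huE⟩ := hnc p u q v hup huq h ⟨C, hC, hp, hq⟩ ⟨D, hD, hu, hv⟩
      have hEC : E = C := hpd E hE C hC p hpE hp
      exact hmid u (hEC ▸ huE) ⟨hup, huq⟩

lemma bound_lem : ∀ N s t : ℕ, ∀ Ps : Finset (Finset ℕ), t - s < N → s ≤ t →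
    (∀ C ∈ Ps, ∀ D ∈ Ps, ∀ x, x ∈ C → x ∈ D → C = D) →
    (∀ a b c d : ℕ, a < b → b < c → c < d → SB Ps a c → SB Ps b d → SB Ps a b) →
    (∀ i, ¬ SB Ps i (i+1)) →
    (∀ C ∈ Ps, ∀ x ∈ C, s ≤ x ∧ x ≤ t) →
    (∀ x, s ≤ x → x ≤ t → ∃ C ∈ Ps, x ∈ C) →
    t - s + 2 ≤ 2 * Ps.card := by
  intro N
  induction N with
  | zero => intro s t Ps h; omega
  | succ N ih =>
    intro s t Ps hN hst hpd hnc hnk hsub hcov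
    obtain ⟨C, hC, htC⟩ := hcov t hst le_rfl
    by_cases hsing : ∀ x ∈ C, x = t
    · by_cases hts : s = t
      · have h1 : 1 ≤ Ps.card := Finset.card_pos.mpr ⟨C, hC⟩
        omega
      have hslt : s < t := lt_of_le_of_ne hst hts
      have key : t - 1 - s + 2 ≤ 2 * (Ps.erase C).card := by
        apply ih s (t-1) _ (by omega) (by omega)
        · intro C1 h1 D1 h2 x hx1 hx2
          exact hpd C1 (Finset.mem_of_mem_erase h1) D1 (Finset.mem_of_mem_erase h2) x hx1 hx2
        · intro a b c d hab hbc hcd h1 h2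
          obtain ⟨E1, hE1, h3, h4⟩ := h1
          obtain ⟨E2, hE2, h5, h6⟩ := h2
          obtain ⟨F, hF, haF, hbF⟩ := hnc a b c d hab hbc hcd
            ⟨E1, Finset.mem_of_mem_erase hE1, h3, h4⟩
            ⟨E2, Finset.mem_of_mem_erase hE2, h5, h6⟩
          refine ⟨F, Finset.mem_erase.mpr ⟨?_, hF⟩, haF, hbF⟩
          intro hFC
          subst hFC
          have ha := hsing a haF
          have hb := hsing b hbF
          omega
        · intro i h1
          obtain ⟨E, hE, h3, h4⟩ := h1
          exact hnk i ⟨E, Finset.mem_of_mem_erase hE, h3, h4⟩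
        · intro D hD x hx
          have h1 := hsub D (Finset.mem_of_mem_erase hD) x hx
          have h2 : x ≠ t := by
            intro h
            subst h
            exact (Finset.mem_erase.mp hD).1 (hpd D (Finset.mem_of_mem_erase hD) C hC x hx htC)
          omega
        · intro x hx1 hx2
          obtain ⟨D, hD, hxD⟩ := hcov x hx1 (by omega)
          refine ⟨D, Finset.mem_erase.mpr ⟨?_, hD⟩, hxD⟩
          intro h
          subst h
          have := hsing x hxD
          omega
      have h1 : 1 ≤ Ps.card := Finset.card_pos.mpr ⟨C, hC⟩
      have h2 : (Ps.erase C).card = Ps.card - 1 := Finset.card_erase_of_mem hC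
      omega
    · push_neg at hsing
      obtain ⟨j0, hj0C, hj0t⟩ := hsing
      have hne : (C.erase t).Nonempty := ⟨j0, Finset.mem_erase.mpr ⟨hj0t, hj0C⟩⟩
      set j := (C.erase t).max' hne with hj
      have hjC : j ∈ C := Finset.mem_of_mem_erase ((C.erase t).max'_mem hne)
      have hjt : j ≠ t := (Finset.mem_erase.mp ((C.erase t).max'_mem hne)).1
      have hjmax : ∀ x ∈ C, x ≠ t → x ≤ j := fun x hx hxt =>
        Finset.le_max' _ x (Finset.mem_erase.mpr ⟨hxt, hx⟩)
      have hjle : j ≤ t := (hsub C hC j hjC).2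
      have hsj : s ≤ j := (hsub C hC j hjC).1
      have hj2 : j + 2 ≤ t := by
        rcases Nat.lt_or_ge (j+1) t with h | h
        · omega
        · exfalso
          have heq : j + 1 = t := by omega
          exact hnk j ⟨C, hC, hjC, heq ▸ htC⟩
      have hmid : ∀ x ∈ C, ¬ (j < x ∧ x < t) := by
        rintro x hx ⟨h1, h2⟩
        have := hjmax x hx (by omega)
        omega
      set Pin := Ps.filter (fun D => ∃ x ∈ D, j < x ∧ x < t) with hPin
      set Pout := Ps.filter (fun D => ¬ ∃ x ∈ D, j < x ∧ x < t) with hPout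
      have hinsub : ∀ D ∈ Pin, ∀ v ∈ D, j < v ∧ v < t := by
        intro D hD v hv
        obtain ⟨hDPs, x, hxD, hx1, hx2⟩ := Finset.mem_filter.mp hD
        exact contain_lem hpd hnc hC hjC htC (by omega) hmid hDPs hxD hx1 hx2 hv
      have hCout : C ∈ Pout := by
        refine Finset.mem_filter.mpr ⟨hC, ?_⟩
        rintro ⟨x, hx, hh⟩
        exact hmid x hx hh
      have hbin : t - 1 - (j+1) + 2 ≤ 2 * Pin.card := by
        apply ih (j+1) (t-1) _ (by omega) (by omega)
        · intro C1 h1 D1 h2 x hx1 hx2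
          exact hpd C1 (Finset.mem_filter.mp h1).1 D1 (Finset.mem_filter.mp h2).1 x hx1 hx2
        · intro a b c d hab hbc hcd h1 h2
          obtain ⟨E1, hE1, h3, h4⟩ := h1
          obtain ⟨E2, hE2, h5, h6⟩ := h2
          obtain ⟨F, hF, haF, hbF⟩ := hnc a b c d hab hbc hcd
            ⟨E1, (Finset.mem_filter.mp hE1).1, h3, h4⟩
            ⟨E2, (Finset.mem_filter.mp hE2).1, h5, h6⟩
          have hFE : F = E1 := hpd F hF E1 (Finset.mem_filter.mp hE1).1 a haF h3
          exact ⟨E1, hE1, hFE ▸ haF, hFE ▸ hbF⟩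
        · intro i h1
          obtain ⟨E, hE, h3, h4⟩ := h1
          exact hnk i ⟨E, (Finset.mem_filter.mp hE).1, h3, h4⟩
        · intro D hD x hx
          have := hinsub D hD x hx
          omega
        · intro x h1 h2
          obtain ⟨D, hD, hxD⟩ := hcov x (by omega) (by omega)
          exact ⟨D, Finset.mem_filter.mpr ⟨hD, ⟨x, hxD, by omega, by omega⟩⟩, hxD⟩
      set E := C.erase t with hEdef
      have hEC : E ⊆ C := Finset.erase_subset _ _
      have hjE : j ∈ E := Finset.mem_erase.mpr ⟨hjt, hjC⟩
      set Pout' := insert E (Pout.erase C) with hPout'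
      have hmemE : E ∈ Pout' := Finset.mem_insert_self _ _
      have hmem' : ∀ D ∈ Pout', D = E ∨ (D ∈ Ps ∧ D ≠ C ∧ ∀ x ∈ D, ¬ (j < x ∧ x < t)) := by
        intro D hD
        rcases Finset.mem_insert.mp hD with h | h
        · exact Or.inl h
        · refine Or.inr ⟨(Finset.mem_filter.mp (Finset.mem_of_mem_erase h)).1,
            (Finset.mem_erase.mp h).1, ?_⟩
          intro x hx hh
          exact (Finset.mem_filter.mp (Finset.mem_of_mem_erase h)).2 ⟨x, hx, hh⟩
      have hsub' : ∀ D ∈ Pout', ∀ x ∈ D, s ≤ x ∧ x ≤ j := by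
        intro D hD x hx
        rcases hmem' D hD with h | ⟨h1, h2, h3⟩
        · subst h
          have h4 := hsub C hC x (hEC hx)
          have h5 : x ≠ t := (Finset.mem_erase.mp hx).1
          have h6 := hjmax x (hEC hx) h5
          omega
        · have h4 := hsub D h1 x hx
          have h5 : x ≠ t := by
            intro h
            subst h
            exact h2 (hpd D h1 C hC x hx htC)
          have h6 := h3 x hx
          omega
      have hbout : j - s + 2 ≤ 2 * Pout'.card := by
        apply ih s j _ (by omega) hsj
        · intro C1 h1 D1 h2 x hx1 hx2
          rcases hmem' C1 h1 with g1 | ⟨g1, g2, _⟩ <;> rcases hmem' D1 h2 with g3 | ⟨g3, g4, _⟩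
          · rw [g1, g3]
          · subst g1
            exact absurd (hpd C hC D1 g3 x (hEC hx1) hx2).symm g4
          · subst g3
            exact absurd (hpd C1 g1 C hC x hx1 (hEC hx2)) g2
          · exact hpd C1 g1 D1 g3 x hx1 hx2
        · intro a b c d hab hbc hcd h1 h2
          obtain ⟨E1, hE1, h3, h4⟩ := h1
          obtain ⟨E2, hE2, h5, h6⟩ := h2
          have hb2j : b ≤ j := (hsub' E2 hE2 b h5).2
          have lift : ∀ D ∈ Pout', ∀ y ∈ D, ∃ G ∈ Ps, y ∈ G ∧
              ∀ z ∈ G, z ≤ j → z ∈ D := by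
            intro D hD y hy
            rcases hmem' D hD with g | ⟨g1, _, _⟩
            · subst g
              exact ⟨C, hC, hEC hy, fun z hz hzj =>
                Finset.mem_erase.mpr ⟨by omega, hz⟩⟩
            · exact ⟨D, g1, hy, fun z hz _ => hz⟩
          obtain ⟨G1, hG1, hg1, hback⟩ := lift E1 hE1 a h3
          obtain ⟨G1c, hG1c, hg1c, _⟩ := lift E1 hE1 c h4
          obtain ⟨G2, hG2, hg2, _⟩ := lift E2 hE2 b h5
          obtain ⟨G2d, hG2d, hg2d, _⟩ := lift E2 hE2 d h6
          have e1 : G1c = G1 := by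
            rcases hmem' E1 hE1 with g | ⟨g1, _, _⟩
            · subst g
              exact hpd G1c hG1c G1 hG1 a (by
                  have := hpd G1c hG1c C hC c hg1c (hEC h4); exact this ▸ (hEC h3)) hg1
            · rw [hpd G1c hG1c E1 g1 c hg1c h4, hpd G1 hG1 E1 g1 a hg1 h3]
          have e2 : G2d = G2 := by
            rcases hmem' E2 hE2 with g | ⟨g1, _, _⟩
            · subst g
              exact hpd G2d hG2d G2 hG2 b (by
                  have := hpd G2d hG2d C hC d hg2d (hEC h6); exact this ▸ (hEC h5)) hg2
            · rw [hpd G2d hG2d E2 g1 d hg2d h6, hpd G2 hG2 E2 g1 b hg2 h5]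
          obtain ⟨F, hF, haF, hbF⟩ := hnc a b c d hab hbc hcd
            ⟨G1, hG1, hg1, e1 ▸ hg1c⟩ ⟨G2, hG2, hg2, e2 ▸ hg2d⟩
          have hFG1 : F = G1 := hpd F hF G1 hG1 a haF hg1
          exact ⟨E1, hE1, h3, hback b (hFG1 ▸ hbF) hb2j⟩
        · intro i h1
          obtain ⟨D, hD, h3, h4⟩ := h1
          rcases hmem' D hD with g | ⟨g1, _, _⟩
          · subst g
            exact hnk i ⟨C, hC, hEC h3, hEC h4⟩
          · exact hnk i ⟨D, g1, h3, h4⟩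
        · exact hsub'
        · intro x hx1 hx2
          obtain ⟨D, hD, hxD⟩ := hcov x hx1 (by omega)
          have hDout : D ∈ Pout := by
            refine Finset.mem_filter.mpr ⟨hD, ?_⟩
            intro hex
            have := hinsub D (Finset.mem_filter.mpr ⟨hD, hex⟩) x hxD
            omega
          by_cases hDC : D = C
          · subst hDC
            exact ⟨E, hmemE, Finset.mem_erase.mpr ⟨by omega, hxD⟩⟩
          · exact ⟨D, Finset.mem_insert_of_mem (Finset.mem_erase.mpr ⟨hDC, hDout⟩), hxD⟩
      have hEnot : E ∉ Pout.erase C := by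
        intro h
        have hEPs : E ∈ Ps := (Finset.mem_filter.mp (Finset.mem_of_mem_erase h)).1
        have : E = C := hpd E hEPs C hC j hjE hjC
        exact Finset.notMem_erase t C (by rw [← hEdef, this]; exact htC)
      have hc1 : Pout'.card = (Pout.erase C).card + 1 := Finset.card_insert_of_notMem hEnot
      have hc2 : (Pout.erase C).card = Pout.card - 1 := Finset.card_erase_of_mem hCout
      have hc3 : 1 ≤ Pout.card := Finset.card_pos.mpr ⟨C, hCout⟩
      have hc4 : Pin.card + Pout.card = Ps.card := by
        rw [hPin, hPout]
        exact Finset.card_filter_add_card_filter_not _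
      omega
theorem stmt6 (n : ℕ) (P : Finpartition (Finset.Icc 1 (2 * n + 1)))
    (h : SpecialPartition n P) (B : Finset ℕ) (hB : B ∈ P.parts)
    (b b' : ℕ) (hb : b ∈ B) (hb' : b' ∈ B) (hlt : b < b')
    (hbetween : ∀ x ∈ B, ¬ (b < x ∧ x < b')) :
    ∃ Q : Finpartition (Finset.Icc 1 (b' - b - 1)),
      NonCrossing Q ∧ NoConsec Q ∧ Q.parts.card = (b' - b) / 2 ∧
      ∀ x y : ℕ, 1 ≤ x → x < y → y ≤ b' - b - 1 →
        (SameBlock Q x y ↔ SameBlock P (b + x) (b + y)) := by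
  obtain ⟨hNC, hNK, hcard⟩ := h
  have hpd : ∀ C ∈ P.parts, ∀ D ∈ P.parts, ∀ x, x ∈ C → x ∈ D → C = D :=
    fun C hC D hD x h1 h2 => P.eq_of_mem_parts hC hD h1 h2
  have hsub : ∀ C ∈ P.parts, ∀ x ∈ C, 1 ≤ x ∧ x ≤ 2*n+1 := by
    intro C hC x hx
    exact Finset.mem_Icc.mp (P.le hC hx)
  have hcov : ∀ x, 1 ≤ x → x ≤ 2*n+1 → ∃ C ∈ P.parts, x ∈ C := by
    intro x h1 h2
    exact P.exists_mem (Finset.mem_Icc.mpr ⟨h1, h2⟩)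
  have hb1 : 1 ≤ b := (hsub B hB b hb).1
  have hb'2 : b' ≤ 2*n+1 := (hsub B hB b' hb').2
  have hbb' : b + 2 ≤ b' := by
    rcases Nat.lt_or_ge (b+1) b' with hlt2 | hge
    · omega
    · exfalso
      have heq : b + 1 = b' := by omega
      exact hNK b ⟨B, hB, hb, heq ▸ hb'⟩
  set m := b' - b - 1 with hmdef
  have hm1 : 1 ≤ m := by omega
  have hb'm : b' = b + m + 1 := by omega
  set inside := P.parts.filter (fun C => ∃ x ∈ C, b < x ∧ x < b') with hindef
  have hinsub : ∀ C ∈ inside, ∀ v ∈ C, b < v ∧ v < b' := by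
    intro C hC v hv
    obtain ⟨hCP, x, hxC, hx1, hx2⟩ := Finset.mem_filter.mp hC
    exact contain_lem hpd hNC hB hb hb' (by omega) hbetween hCP hxC hx1 hx2 hv
  set Qparts := inside.image (fun C => C.image (· - b)) with hQpdef
  have hQsub : ∀ D ∈ Qparts, ∀ x ∈ D, 1 ≤ x ∧ x ≤ m := by
    intro D hD x hx
    obtain ⟨C, hC, rfl⟩ := Finset.mem_image.mp hD
    obtain ⟨v, hv, rfl⟩ := Finset.mem_image.mp hx
    have := hinsub C hC v hv
    omega
  have hQcov : ∀ x, 1 ≤ x → x ≤ m → ∃ D ∈ Qparts, x ∈ D := by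
    intro x h1 h2
    obtain ⟨C, hC, hxC⟩ := hcov (b + x) (by omega) (by omega)
    have hCin : C ∈ inside := Finset.mem_filter.mpr ⟨hC, ⟨b+x, hxC, by omega, by omega⟩⟩
    exact ⟨C.image (· - b), Finset.mem_image_of_mem _ hCin,
      Finset.mem_image.mpr ⟨b+x, hxC, by omega⟩⟩
  have hQpd : ∀ D1 ∈ Qparts, ∀ D2 ∈ Qparts, ∀ x, x ∈ D1 → x ∈ D2 → D1 = D2 := by
    intro D1 h1 D2 h2 x hx1 hx2
    obtain ⟨C1, hC1, rfl⟩ := Finset.mem_image.mp h1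
    obtain ⟨C2, hC2, rfl⟩ := Finset.mem_image.mp h2
    obtain ⟨u, hu, hux⟩ := Finset.mem_image.mp hx1
    obtain ⟨v, hv, hvx⟩ := Finset.mem_image.mp hx2
    have h3 := hinsub C1 hC1 u hu
    have h4 := hinsub C2 hC2 v hv
    have huv : u = v := by omega
    rw [hpd C1 (Finset.mem_filter.mp hC1).1 C2 (Finset.mem_filter.mp hC2).1 u hu (huv ▸ hv)]
  have hiff : ∀ x y : ℕ, 1 ≤ x → x < y → y ≤ m →
      (SB Qparts x y ↔ SB P.parts (b + x) (b + y)) := by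
    intro x y h1 h2 h3
    constructor
    · rintro ⟨D, hD, hx, hy⟩
      obtain ⟨C, hC, rfl⟩ := Finset.mem_image.mp hD
      obtain ⟨u, hu, hux⟩ := Finset.mem_image.mp hx
      obtain ⟨v, hv, hvy⟩ := Finset.mem_image.mp hy
      have g1 := hinsub C hC u hu
      have g2 := hinsub C hC v hv
      have e1 : u = b + x := by omega
      have e2 : v = b + y := by omega
      exact ⟨C, (Finset.mem_filter.mp hC).1, e1 ▸ hu, e2 ▸ hv⟩
    · rintro ⟨C, hC, hx, hy⟩
      have hCin : C ∈ inside := Finset.mem_filter.mpr ⟨hC, ⟨b+x, hx, by omega, by omega⟩⟩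
      exact ⟨C.image (· - b), Finset.mem_image_of_mem _ hCin,
        Finset.mem_image.mpr ⟨b+x, hx, by omega⟩,
        Finset.mem_image.mpr ⟨b+y, hy, by omega⟩⟩
  have hQNC : ∀ a c e d : ℕ, a < c → c < e → e < d → SB Qparts a e → SB Qparts c d →
      SB Qparts a c := by
    intro a c e d h1 h2 h3 hae hcd
    obtain ⟨D1, hD1, haD, heD⟩ := hae
    obtain ⟨D2, hD2, hcD, hdD⟩ := hcd
    have ba := hQsub D1 hD1 a haD
    have be := hQsub D1 hD1 e heD
    have bc := hQsub D2 hD2 c hcD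
    have bd := hQsub D2 hD2 d hdD
    have p1 : SB P.parts (b + a) (b + e) := (hiff a e ba.1 (by omega) be.2).mp ⟨D1, hD1, haD, heD⟩
    have p2 : SB P.parts (b + c) (b + d) := (hiff c d bc.1 (by omega) bd.2).mp ⟨D2, hD2, hcD, hdD⟩
    have p3 : SB P.parts (b + a) (b + c) :=
      hNC (b+a) (b+c) (b+e) (b+d) (by omega) (by omega) (by omega) p1 p2
    exact (hiff a c ba.1 h1 bc.2).mpr p3
  have hQNK : ∀ i : ℕ, ¬ SB Qparts i (i + 1) := by
    intro i hSB
    obtain ⟨D, hD, h1, h2⟩ := hSB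
    have g1 := hQsub D hD i h1
    have g2 := hQsub D hD (i+1) h2
    have p1 : SB P.parts (b + i) (b + (i+1)) :=
      (hiff i (i+1) g1.1 (by omega) g2.2).mp ⟨D, hD, h1, h2⟩
    have e : b + (i + 1) = (b + i) + 1 := by omega
    exact hNK (b + i) (e ▸ p1)
  -- cardinality of Qparts
  have hQbound : m - 1 + 2 ≤ 2 * Qparts.card :=
    bound_lem (m + 1) 1 m Qparts (by omega) hm1 hQpd hQNC hQNK hQsub hQcov
  have hQle : Qparts.card ≤ inside.card := Finset.card_image_le
  set outside := P.parts.filter (fun C => ¬ ∃ x ∈ C, b < x ∧ x < b') with houtdef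
  have hsplit : inside.card + outside.card = P.parts.card := by
    rw [hindef, houtdef]
    exact Finset.card_filter_add_card_filter_not _
  have houtval : ∀ C ∈ outside, ∀ x ∈ C, (1 ≤ x ∧ x ≤ b) ∨ (b' ≤ x ∧ x ≤ 2*n+1) := by
    intro C hC x hx
    obtain ⟨hCP, hCn⟩ := Finset.mem_filter.mp hC
    have h1 := hsub C hCP x hx
    have h2 : ¬ (b < x ∧ x < b') := fun hh => hCn ⟨x, hx, hh⟩
    omega
  set f : ℕ → ℕ := fun x => if x ≤ b then x else x - (m+1) with hfdef
  have hfval : ∀ x, (x ≤ b ∨ b' ≤ x) → (x ≤ b → f x = x) ∧ (b' ≤ x → f x = x - (m+1)) := by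
    intro x hx
    constructor
    · intro h; simp only [hfdef]; rw [if_pos h]
    · intro h; simp only [hfdef]; rw [if_neg (by omega)]
  have hfmono : ∀ u v, (u ≤ b ∨ b' ≤ u) → (v ≤ b ∨ b' ≤ v) → f u < f v → u < v := by
    intro u v hu hv hlt2
    simp only [hfdef] at hlt2
    split_ifs at hlt2 <;> omega
  have hfeq : ∀ u v, (u ≤ b ∨ b' ≤ u) → (v ≤ b ∨ b' ≤ v) → u < v → f u = f v →
      u = b ∧ v = b' := by
    intro u v hu hv hlt2 he
    simp only [hfdef] at he
    split_ifs at he <;> omega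
  have hfcons : ∀ u v, (u ≤ b ∨ b' ≤ u) → (v ≤ b ∨ b' ≤ v) → u < v → f v = f u + 1 →
      v = u + 1 ∨ (u = b - 1 ∧ v = b') ∨ (u = b ∧ v = b' + 1) := by
    intro u v hu hv hlt2 he
    simp only [hfdef] at he
    split_ifs at he <;> omega
  set Qout := outside.image (fun C => C.image f) with hQoutdef
  have hval : ∀ C ∈ outside, ∀ x ∈ C, x ≤ b ∨ b' ≤ x := by
    intro C hC x hx
    have := houtval C hC x hx
    omega
  have h2nm : 1 ≤ 2*n - m := by omega
  have hQosub : ∀ D ∈ Qout, ∀ y ∈ D, 1 ≤ y ∧ y ≤ 2*n - m := by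
    intro D hD y hy
    obtain ⟨C, hC, rfl⟩ := Finset.mem_image.mp hD
    obtain ⟨x, hx, rfl⟩ := Finset.mem_image.mp hy
    have h1 := houtval C hC x hx
    simp only [hfdef]
    split_ifs <;> omega
  have hQocov : ∀ y, 1 ≤ y → y ≤ 2*n - m → ∃ D ∈ Qout, y ∈ D := by
    intro y h1 h2
    by_cases hyb : y ≤ b
    · obtain ⟨C, hC, hxC⟩ := hcov y (by omega) (by omega)
      have hCout : C ∈ outside := by
        refine Finset.mem_filter.mpr ⟨hC, ?_⟩
        intro hex
        have := hinsub C (Finset.mem_filter.mpr ⟨hC, hex⟩) y hxC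
        omega
      refine ⟨C.image f, Finset.mem_image_of_mem _ hCout,
        Finset.mem_image.mpr ⟨y, hxC, ?_⟩⟩
      simp only [hfdef]
      rw [if_pos hyb]
    · obtain ⟨C, hC, hxC⟩ := hcov (y + (m+1)) (by omega) (by omega)
      have hCout : C ∈ outside := by
        refine Finset.mem_filter.mpr ⟨hC, ?_⟩
        intro hex
        have := hinsub C (Finset.mem_filter.mpr ⟨hC, hex⟩) (y + (m+1)) hxC
        omega
      refine ⟨C.image f, Finset.mem_image_of_mem _ hCout,
        Finset.mem_image.mpr ⟨y + (m+1), hxC, ?_⟩⟩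
      simp only [hfdef]
      rw [if_neg (by omega)]
      omega
  have hsameC : ∀ C ∈ outside, ∀ D ∈ outside, ∀ u ∈ C, ∀ v ∈ D, f u = f v → C = D := by
    intro C hC D hD u hu v hv he
    have hCP := (Finset.mem_filter.mp hC).1
    have hDP := (Finset.mem_filter.mp hD).1
    rcases lt_trichotomy u v with hlt2 | heq | hlt2
    · obtain ⟨e1, e2⟩ := hfeq u v (hval C hC u hu) (hval D hD v hv) hlt2 he
      rw [hpd C hCP B hB u hu (e1 ▸ hb), hpd D hDP B hB v hv (e2 ▸ hb')]
    · subst heq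
      exact hpd C hCP D hDP u hu hv
    · obtain ⟨e1, e2⟩ := hfeq v u (hval D hD v hv) (hval C hC u hu) hlt2 he.symm
      rw [hpd C hCP B hB u hu (e2 ▸ hb'), hpd D hDP B hB v hv (e1 ▸ hb)]
  have hQopd : ∀ D1 ∈ Qout, ∀ D2 ∈ Qout, ∀ y, y ∈ D1 → y ∈ D2 → D1 = D2 := by
    intro D1 h1 D2 h2 y hy1 hy2
    obtain ⟨C1, hC1, rfl⟩ := Finset.mem_image.mp h1
    obtain ⟨C2, hC2, rfl⟩ := Finset.mem_image.mp h2
    obtain ⟨u, hu, hux⟩ := Finset.mem_image.mp hy1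
    obtain ⟨v, hv, hvx⟩ := Finset.mem_image.mp hy2
    rw [hsameC C1 hC1 C2 hC2 u hu v hv (by omega)]
  have hQonc : ∀ a c e d : ℕ, a < c → c < e → e < d → SB Qout a e → SB Qout c d →
      SB Qout a c := by
    intro a c e d h1 h2 h3 hae hcd
    obtain ⟨D1, hD1, haD, heD⟩ := hae
    obtain ⟨D2, hD2, hcD, hdD⟩ := hcd
    obtain ⟨C1, hC1, rfl⟩ := Finset.mem_image.mp hD1
    obtain ⟨C2, hC2, rfl⟩ := Finset.mem_image.mp hD2
    obtain ⟨u1, hu1, he1⟩ := Finset.mem_image.mp haD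
    obtain ⟨u3, hu3, he3⟩ := Finset.mem_image.mp heD
    obtain ⟨u2, hu2, he2⟩ := Finset.mem_image.mp hcD
    obtain ⟨u4, hu4, he4⟩ := Finset.mem_image.mp hdD
    have v1 := hval C1 hC1 u1 hu1
    have v2 := hval C2 hC2 u2 hu2
    have v3 := hval C1 hC1 u3 hu3
    have v4 := hval C2 hC2 u4 hu4
    have o1 : u1 < u2 := hfmono u1 u2 v1 v2 (by omega)
    have o2 : u2 < u3 := hfmono u2 u3 v2 v3 (by omega)
    have o3 : u3 < u4 := hfmono u3 u4 v3 v4 (by omega)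
    have hC1P := (Finset.mem_filter.mp hC1).1
    have hC2P := (Finset.mem_filter.mp hC2).1
    obtain ⟨F, hF, hFa, hFb⟩ := hNC u1 u2 u3 u4 o1 o2 o3
      ⟨C1, hC1P, hu1, hu3⟩ ⟨C2, hC2P, hu2, hu4⟩
    have hFC : F = C1 := hpd F hF C1 hC1P u1 hFa hu1
    refine ⟨C1.image f, Finset.mem_image_of_mem _ hC1, ?_, ?_⟩
    · exact he1 ▸ Finset.mem_image_of_mem f hu1
    · exact he2 ▸ Finset.mem_image_of_mem f (hFC ▸ hFb)
  have hQonk : ∀ i : ℕ, ¬ SB Qout i (i + 1) := by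
    intro i hSB
    obtain ⟨D, hD, h1, h2⟩ := hSB
    obtain ⟨C, hC, rfl⟩ := Finset.mem_image.mp hD
    obtain ⟨u, hu, heu⟩ := Finset.mem_image.mp h1
    obtain ⟨v, hv, hev⟩ := Finset.mem_image.mp h2
    have vu := hval C hC u hu
    have vv := hval C hC v hv
    have hCP := (Finset.mem_filter.mp hC).1
    have hlt2 : u < v := hfmono u v vu vv (by omega)
    rcases hfcons u v vu vv hlt2 (by omega) with he | ⟨e1, e2⟩ | ⟨e1, e2⟩
    · exact hNK u ⟨C, hCP, hu, he ▸ hv⟩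
    · have hCB : C = B := hpd C hCP B hB v hv (e2 ▸ hb')
      have hb1m : b - 1 ∈ B := by rw [← hCB, ← e1]; exact hu
      have he2 : (b - 1) + 1 = b := by omega
      exact hNK (b-1) ⟨B, hB, hb1m, he2 ▸ hb⟩
    · have hCB : C = B := hpd C hCP B hB u hu (e1 ▸ hb)
      have hvB : b' + 1 ∈ B := by rw [← hCB, ← e2]; exact hv
      exact hNK b' ⟨B, hB, hb', hvB⟩
  have hQobound : 2*n - m - 1 + 2 ≤ 2 * Qout.card :=
    bound_lem (2*n - m + 1) 1 (2*n - m) Qout (by omega) h2nm hQopd hQonc hQonk hQosub hQocov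
  have hQole : Qout.card ≤ outside.card := Finset.card_image_le
  -- build the Finpartition
  refine ⟨⟨Qparts, ?_, ?_, ?_⟩, hQNC, hQNK, ?_, hiff⟩
  · rw [Finset.supIndep_iff_pairwiseDisjoint]
    intro D1 h1 D2 h2 hne
    show Disjoint D1 D2
    rw [Finset.disjoint_left]
    intro x hx1 hx2
    exact hne (hQpd D1 h1 D2 h2 x hx1 hx2)
  · apply Finset.ext
    intro x
    rw [Finset.mem_sup, Finset.mem_Icc]
    constructor
    · rintro ⟨D, hD, hx⟩
      exact hQsub D hD x hx
    · rintro ⟨h1, h2⟩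
      exact hQcov x h1 h2
  · intro hbot
    obtain ⟨C, hC, hCe⟩ := Finset.mem_image.mp hbot
    have hCe2 : C = ∅ := Finset.image_eq_empty.mp hCe
    have hCP := (Finset.mem_filter.mp hC).1
    rw [hCe2] at hCP
    exact P.bot_notMem hCP
  · show Qparts.card = (b' - b) / 2
    omega
end

section
/- If π is a non-crossing partition of [2n+1] into exactly n+1 blocks with no block containing two consecutive integers, then there is no way to extend π to a non-crossing partition of [2n+2] with no block containing two consecutive integers by adding 2n+2 to an existing block of π; the only extension is to add {2n+2} as a singleton block. -/
open scoped Classical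

def NC' (Ps : Finset (Finset ℕ)) : Prop :=
  ∀ a b c d : ℕ, a < b → b < c → c < d → (∃ B ∈ Ps, a ∈ B ∧ c ∈ B) →
    (∃ B ∈ Ps, b ∈ B ∧ d ∈ B) → ∃ B ∈ Ps, a ∈ B ∧ b ∈ B

lemma key : ∀ m : ℕ, ∀ a : ℕ, ∀ Ps : Finset (Finset ℕ),
    (∀ B ∈ Ps, B.Nonempty) →
    (∀ B ∈ Ps, B ⊆ Finset.Icc (a+1) (a+m)) →
    (∀ i, a+1 ≤ i → i ≤ a+m → ∃ B ∈ Ps, i ∈ B) →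
    (∀ B ∈ Ps, ∀ C ∈ Ps, ∀ x, x ∈ B → x ∈ C → B = C) →
    NC' Ps →
    (∀ B ∈ Ps, ∀ i, i ∈ B → i + 1 ∈ B → False) →
    1 ≤ m → m + 1 ≤ 2 * Ps.card := by
  intro m
  induction m using Nat.strong_induction_on with
  | _ m IH =>
  intro a Ps hne hbd hcov hdisj hnc hcons hm
  obtain ⟨C, hC, hmC⟩ := hcov (a+m) (by omega) le_rfl
  by_cases hCs : C = {a+m}
  · -- C is the singleton {a+m}
    by_cases hm1 : m = 1
    · have : 0 < Ps.card := Finset.card_pos.2 ⟨C, hC⟩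
      omega
    · have hm2 : 2 ≤ m := by omega
      have hsub : ∀ B ∈ Ps.erase C, B ⊆ Finset.Icc (a+1) (a+(m-1)) := by
        intro B hB e he
        have hBP := Finset.mem_of_mem_erase hB
        have hbds := hbd B hBP he
        rw [Finset.mem_Icc] at hbds ⊢
        refine ⟨hbds.1, ?_⟩
        rcases eq_or_lt_of_le hbds.2 with h | h
        · exfalso
          exact (Finset.ne_of_mem_erase hB) (hdisj B hBP C hC e he (h ▸ hmC))
        · omega
      have := IH (m-1) (by omega) a (Ps.erase C)
        (fun B hB => hne B (Finset.mem_of_mem_erase hB)) hsub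
        (fun i hi1 hi2 => by
          obtain ⟨B, hB, hiB⟩ := hcov i hi1 (by omega)
          refine ⟨B, Finset.mem_erase.2 ⟨?_, hB⟩, hiB⟩
          rintro rfl
          rw [hCs, Finset.mem_singleton] at hiB
          omega)
        (fun B hB C' hC' x hx hx' => hdisj B (Finset.mem_of_mem_erase hB) C'
          (Finset.mem_of_mem_erase hC') x hx hx')
        (by
          intro a' b' c' d' h1 h2 h3 ⟨B1, hB1, ha1, hc1⟩ ⟨B2, hB2, hb2, hd2⟩
          obtain ⟨E, hE, haE, hbE⟩ := hnc a' b' c' d' h1 h2 h3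
            ⟨B1, Finset.mem_of_mem_erase hB1, ha1, hc1⟩
            ⟨B2, Finset.mem_of_mem_erase hB2, hb2, hd2⟩
          refine ⟨E, Finset.mem_erase.2 ⟨?_, hE⟩, haE, hbE⟩
          rintro rfl
          rw [hCs, Finset.mem_singleton] at haE hbE
          omega)
        (fun B hB => hcons B (Finset.mem_of_mem_erase hB))
        (by omega)
      have hcard : (Ps.erase C).card = Ps.card - 1 := Finset.card_erase_of_mem hC
      have : 0 < Ps.card := Finset.card_pos.2 ⟨C, hC⟩
      omega
  · -- C has a second element
    have herne : (C.erase (a+m)).Nonempty := by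
      rw [Finset.erase_nonempty hmC]
      exact (Finset.nontrivial_iff_ne_singleton hmC).mpr hCs
    set z := (C.erase (a+m)).max' herne with hz
    have hzmem : z ∈ C.erase (a+m) := (C.erase (a+m)).max'_mem herne
    have hzC : z ∈ C := Finset.mem_of_mem_erase hzmem
    have hzne : z ≠ a+m := Finset.ne_of_mem_erase hzmem
    have hzbd := hbd C hC hzC
    rw [Finset.mem_Icc] at hzbd
    have hz1 : a+1 ≤ z := hzbd.1
    have hzmax : ∀ y ∈ C, y ≠ a+m → y ≤ z := by
      intro y hy hyne
      exact (C.erase (a+m)).le_max' y (Finset.mem_erase.2 ⟨hyne, hy⟩)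
    have hz2 : z + 2 ≤ a + m := by
      have hzlt : z < a + m := by omega
      by_contra hcon
      have : z + 1 = a + m := by omega
      exact hcons C hC z hzC (this ▸ hmC)
    -- geometric claim
    have claim : ∀ D ∈ Ps, ∀ y ∈ D, z+1 ≤ y → y ≤ a+m-1 →
        ∀ w ∈ D, z+1 ≤ w ∧ w ≤ a+m-1 := by
      intro D hD y hyD hy1 hy2 w hwD
      have hwbd := hbd D hD hwD
      rw [Finset.mem_Icc] at hwbd
      have hDC : D ≠ C := by
        rintro rfl
        exact absurd (hzmax y hyD (by omega)) (by omega)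
      have hwm : w ≤ a+m-1 := by
        rcases eq_or_lt_of_le hwbd.2 with h | h
        · exact absurd (hdisj D hD C hC w hwD (h ▸ hmC)) hDC
        · omega
      refine ⟨?_, hwm⟩
      by_contra hw
      push_neg at hw
      have hwz : w < z := by
        rcases eq_or_lt_of_le (Nat.lt_succ_iff.mp hw) with h | h
        · exact absurd (hdisj D hD C hC w hwD (h ▸ hzC)) hDC
        · exact h
      obtain ⟨E, hE, hwE, hzE⟩ := hnc w z y (a+m) hwz (by omega) (by omega)
        ⟨D, hD, hwD, hyD⟩ ⟨C, hC, hzC, hmC⟩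
      have h1 : E = D := hdisj E hE D hD w hwE hwD
      have h2 : E = C := hdisj E hE C hC z hzE hzC
      exact hDC (h1 ▸ h2)
    set P1 := Ps.filter (fun D => D ⊆ Finset.Icc (z+1) (a+m-1)) with hP1
    set P2 := Ps.filter (fun D => ¬ D ⊆ Finset.Icc (z+1) (a+m-1)) with hP2
    have hmemP1 : ∀ D ∈ Ps, ∀ y ∈ D, z+1 ≤ y → y ≤ a+m-1 → D ∈ P1 := by
      intro D hD y hy h1 h2
      rw [hP1, Finset.mem_filter]
      refine ⟨hD, fun w hw => ?_⟩
      rw [Finset.mem_Icc]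
      exact claim D hD y hy h1 h2 w hw
    -- IH on P1
    have hIH1 := IH (a+m-1-z) (by omega) z P1
      (fun B hB => hne B (Finset.mem_filter.mp hB).1)
      (fun B hB => by
        rw [show z + (a+m-1-z) = a+m-1 by omega]
        exact (Finset.mem_filter.mp hB).2)
      (fun i hi1 hi2 => by
        rw [show z + (a+m-1-z) = a+m-1 by omega] at hi2
        obtain ⟨B, hB, hiB⟩ := hcov i (by omega) (by omega)
        exact ⟨B, hmemP1 B hB i hiB hi1 hi2, hiB⟩)
      (fun B hB C' hC' x hx hx' => hdisj B (Finset.mem_filter.mp hB).1 C'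
        (Finset.mem_filter.mp hC').1 x hx hx')
      (by
        intro a' b' c' d' h1 h2 h3 ⟨B1, hB1, ha1, hc1⟩ ⟨B2, hB2, hb2, hd2⟩
        obtain ⟨E, hE, haE, hbE⟩ := hnc a' b' c' d' h1 h2 h3
          ⟨B1, (Finset.mem_filter.mp hB1).1, ha1, hc1⟩
          ⟨B2, (Finset.mem_filter.mp hB2).1, hb2, hd2⟩
        have hbd1 := (Finset.mem_filter.mp hB1).2 ha1
        rw [Finset.mem_Icc] at hbd1
        exact ⟨E, hmemP1 E hE a' haE hbd1.1 hbd1.2, haE, hbE⟩)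
      (fun B hB => hcons B (Finset.mem_filter.mp hB).1)
      (by omega)
    -- build P2'
    have hCP2 : C ∈ P2 := by
      rw [hP2, Finset.mem_filter]
      refine ⟨hC, fun hsub => ?_⟩
      have := hsub hzC
      rw [Finset.mem_Icc] at this
      omega
    set C' := C.erase (a+m) with hC'def
    have hC'notin : C' ∉ Ps := by
      intro hmem
      have heq := hdisj C' hmem C hC z hzmem hzC
      rw [← heq] at hmC
      exact Finset.notMem_erase (a+m) C hmC
    set P2' := insert C' (P2.erase C) with hP2'
    have hP2sub : ∀ B ∈ P2.erase C, B ∈ Ps :=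
      fun B hB => (Finset.mem_filter.mp (Finset.mem_of_mem_erase hB)).1
    have hcardP2' : P2'.card = P2.card := by
      rw [hP2', Finset.card_insert_of_notMem
        (fun hmem => hC'notin (hP2sub C' hmem)),
        Finset.card_erase_of_mem hCP2]
      have : 0 < P2.card := Finset.card_pos.2 ⟨C, hCP2⟩
      omega
    -- bounds for P2'
    have hbd2 : ∀ B ∈ P2', B ⊆ Finset.Icc (a+1) (a+(z-a)) := by
      intro B hB e he
      rw [show a + (z-a) = z by omega, Finset.mem_Icc]
      rcases Finset.mem_insert.mp hB with rfl | hB'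
      · have heC : e ∈ C := Finset.mem_of_mem_erase he
        have := hbd C hC heC
        rw [Finset.mem_Icc] at this
        exact ⟨this.1, hzmax e heC (Finset.ne_of_mem_erase he)⟩
      · have hBP := hP2sub B hB'
        have hebd := hbd B hBP he
        rw [Finset.mem_Icc] at hebd
        refine ⟨hebd.1, ?_⟩
        have hnotP1 : B ∉ P1 := by
          intro hmem
          have := (Finset.mem_filter.mp (Finset.mem_of_mem_erase hB')).2
          exact this (Finset.mem_filter.mp hmem).2
        by_contra hcon
        push_neg at hcon
        have hem : e ≠ a+m := by
          intro hee
          exact (Finset.ne_of_mem_erase hB')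
            (hdisj B hBP C hC e he (by rw [hee]; exact hmC))
        exact hnotP1 (hmemP1 B hBP e he hcon (by omega))
    have hIH2 := IH (z-a) (by omega) a P2'
      (by
        intro B hB
        rcases Finset.mem_insert.mp hB with rfl | hB'
        · exact ⟨z, hzmem⟩
        · exact hne B (hP2sub B hB'))
      hbd2
      (by
        intro i hi1 hi2
        rw [show a + (z-a) = z by omega] at hi2
        obtain ⟨B, hB, hiB⟩ := hcov i hi1 (by omega)
        have hBnotP1 : B ∉ P1 := by
          intro hmem
          have := (Finset.mem_filter.mp hmem).2 hiB
          rw [Finset.mem_Icc] at this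
          omega
        have hBP2 : B ∈ P2 := by
          rw [hP2, Finset.mem_filter]
          refine ⟨hB, fun hsub => hBnotP1 ?_⟩
          rw [hP1, Finset.mem_filter]
          exact ⟨hB, hsub⟩
        by_cases hBC : B = C
        · exact ⟨C', Finset.mem_insert_self _ _,
            Finset.mem_erase.2 ⟨by omega, hBC ▸ hiB⟩⟩
        · exact ⟨B, Finset.mem_insert_of_mem (Finset.mem_erase.2 ⟨hBC, hBP2⟩), hiB⟩)
      (by
        intro B hB D hD x hx hx'
        rcases Finset.mem_insert.mp hB with rfl | hB' <;>
          rcases Finset.mem_insert.mp hD with rfl | hD'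
        · rfl
        · exfalso
          exact (Finset.ne_of_mem_erase hD')
            (hdisj D (hP2sub D hD') C hC x hx' (Finset.mem_of_mem_erase hx))
        · exfalso
          exact (Finset.ne_of_mem_erase hB')
            (hdisj B (hP2sub B hB') C hC x hx (Finset.mem_of_mem_erase hx'))
        · exact hdisj B (hP2sub B hB') D (hP2sub D hD') x hx hx')
      (by
        rintro a' b' c' d' h1 h2 h3 ⟨B1, hB1, ha1, hc1⟩ ⟨B2, hB2, hb2, hd2⟩
        have lift : ∀ B ∈ P2', ∃ B0 ∈ Ps, B ⊆ B0 := by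
          intro B hB
          rcases Finset.mem_insert.mp hB with rfl | hB'
          · exact ⟨C, hC, Finset.erase_subset _ _⟩
          · exact ⟨B, hP2sub B hB', le_refl _⟩
        obtain ⟨B1', hB1', hsub1⟩ := lift B1 hB1
        obtain ⟨B2', hB2', hsub2⟩ := lift B2 hB2
        obtain ⟨E, hE, haE, hbE⟩ := hnc a' b' c' d' h1 h2 h3
          ⟨B1', hB1', hsub1 ha1, hsub1 hc1⟩ ⟨B2', hB2', hsub2 hb2, hsub2 hd2⟩
        have ha'bd := hbd2 B1 hB1 ha1
        have hb'bd := hbd2 B2 hB2 hb2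
        rw [show a + (z-a) = z by omega, Finset.mem_Icc] at ha'bd hb'bd
        have hEnotP1 : E ∉ P1 := by
          intro hmem
          have := (Finset.mem_filter.mp hmem).2 haE
          rw [Finset.mem_Icc] at this
          omega
        have hEP2 : E ∈ P2 := by
          rw [hP2, Finset.mem_filter]
          refine ⟨hE, fun hsub => hEnotP1 ?_⟩
          rw [hP1, Finset.mem_filter]
          exact ⟨hE, hsub⟩
        by_cases hEC : E = C
        · exact ⟨C', Finset.mem_insert_self _ _,
            Finset.mem_erase.2 ⟨by omega, hEC ▸ haE⟩,
            Finset.mem_erase.2 ⟨by omega, hEC ▸ hbE⟩⟩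
        · exact ⟨E, Finset.mem_insert_of_mem (Finset.mem_erase.2 ⟨hEC, hEP2⟩),
            haE, hbE⟩)
      (by
        intro B hB i hi hi'
        rcases Finset.mem_insert.mp hB with rfl | hB'
        · exact hcons C hC i (Finset.mem_of_mem_erase hi) (Finset.mem_of_mem_erase hi')
        · exact hcons B (hP2sub B hB') i hi hi')
      (by omega)
    have hsum : P1.card + P2.card = Ps.card := by
      rw [hP1, hP2]
      exact Finset.card_filter_add_card_filter_not _
    omega

lemma sameblock_of_mem {m : ℕ} (P : Finpartition (Finset.Icc 1 m)) {B : Finset ℕ}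
    (hB : B ∈ P.parts) {a b : ℕ} (ha : a ∈ B) (hb : b ∈ B) : SameBlock P a b :=
  ⟨B, hB, ha, hb⟩

theorem stmt7 (n : ℕ) (P : Finpartition (Finset.Icc 1 (2 * n + 1)))
    (h : SpecialPartition n P)
    (Q : Finpartition (Finset.Icc 1 (2 * n + 2)))
    (hQnc : NonCrossing Q) (hQcons : NoConsec Q)
    (hrestrict : ∀ x y : ℕ, 1 ≤ x → x ≤ 2 * n + 1 → 1 ≤ y → y ≤ 2 * n + 1 →
      (SameBlock Q x y ↔ SameBlock P x y)) :
    (∀ x : ℕ, 1 ≤ x → x ≤ 2 * n + 1 → ¬ SameBlock Q x (2 * n + 2)) ∧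
    ({2 * n + 2} : Finset ℕ) ∈ Q.parts := by
  classical
  obtain ⟨hPnc, hPcons, hPcard⟩ := h
  have hparts_sub : ∀ D ∈ P.parts, D ⊆ Finset.Icc 1 (2*n+1) := fun D hD => P.le hD
  have h1 : ∀ x : ℕ, 1 ≤ x → x ≤ 2 * n + 1 → ¬ SameBlock Q x (2 * n + 2) := by
    rintro x0 hx01 hx02 ⟨B, hB, hx0B, htB⟩
    set S := B ∩ Finset.Icc 1 (2*n+1) with hS
    have hSne : S.Nonempty :=
      ⟨x0, Finset.mem_inter.2 ⟨hx0B, Finset.mem_Icc.2 ⟨hx01, hx02⟩⟩⟩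
    set x := S.max' hSne with hxdef
    have hxS : x ∈ S := S.max'_mem hSne
    have hxB : x ∈ B := (Finset.mem_inter.mp hxS).1
    have hxbd := Finset.mem_Icc.mp (Finset.mem_inter.mp hxS).2
    have hxmax : ∀ y ∈ B, 1 ≤ y → y ≤ 2*n+1 → y ≤ x := fun y hy h1' h2' =>
      S.le_max' y (Finset.mem_inter.2 ⟨hy, Finset.mem_Icc.2 ⟨h1', h2'⟩⟩)
    have hx2n : x ≤ 2*n := by
      by_contra hcon
      have hxeq : x = 2*n+1 := by omega
      exact hQcons (2*n+1) ⟨B, hB, hxeq ▸ hxB, htB⟩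
    -- any part of P containing an element > x lies entirely in [x+1, 2n+1]
    have claim : ∀ D ∈ P.parts, ∀ y ∈ D, x+1 ≤ y → ∀ w ∈ D, x+1 ≤ w := by
      intro D hD y hyD hy1 w hwD
      have hybd := Finset.mem_Icc.mp (hparts_sub D hD hyD)
      have hwbd := Finset.mem_Icc.mp (hparts_sub D hD hwD)
      have hxy : x ∈ D → False := by
        intro hxD
        have hPxy : SameBlock P x y := ⟨D, hD, hxD, hyD⟩
        have hQxy : SameBlock Q x y :=
          (hrestrict x y hxbd.1 hxbd.2 hybd.1 hybd.2).mpr hPxy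
        obtain ⟨F, hF, hxF, hyF⟩ := hQxy
        have : F = B := Q.eq_of_mem_parts hF hB hxF hxB
        have hyB : y ∈ B := this ▸ hyF
        have := hxmax y hyB hybd.1 hybd.2
        omega
      by_contra hw
      push_neg at hw
      rcases Nat.lt_or_ge w x with hwx | hwx
      · -- w < x : crossing
        have hQwy : SameBlock Q w y :=
          (hrestrict w y hwbd.1 hwbd.2 hybd.1 hybd.2).mpr ⟨D, hD, hwD, hyD⟩
        have hQwx : SameBlock Q w x :=
          hQnc w x y (2*n+2) hwx (by omega) (by omega) hQwy ⟨B, hB, hxB, htB⟩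
        have hPwx : SameBlock P w x :=
          (hrestrict w x hwbd.1 hwbd.2 hxbd.1 hxbd.2).mp hQwx
        obtain ⟨E, hE, hwE, hxE⟩ := hPwx
        have : E = D := P.eq_of_mem_parts hE hD hwE hwD
        exact hxy (this ▸ hxE)
      · have : w = x := by omega
        exact hxy (this ▸ hwD)
    set P1 := P.parts.filter (fun D => D ⊆ Finset.Icc (x+1) (2*n+1)) with hP1
    set P2 := P.parts.filter (fun D => ¬ D ⊆ Finset.Icc (x+1) (2*n+1)) with hP2
    have hmemP1 : ∀ D ∈ P.parts, ∀ y ∈ D, x+1 ≤ y → D ∈ P1 := by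
      intro D hD y hy hy1
      rw [hP1, Finset.mem_filter]
      refine ⟨hD, fun w hw => ?_⟩
      rw [Finset.mem_Icc]
      exact ⟨claim D hD y hy hy1 w hw, (Finset.mem_Icc.mp (hparts_sub D hD hw)).2⟩
    have hbd2 : ∀ D ∈ P2, D ⊆ Finset.Icc 1 x := by
      intro D hD e he
      have hDP := (Finset.mem_filter.mp hD).1
      have hebd := Finset.mem_Icc.mp (hparts_sub D hDP he)
      rw [Finset.mem_Icc]
      refine ⟨hebd.1, ?_⟩
      by_contra hcon
      push_neg at hcon
      exact (Finset.mem_filter.mp hD).2 (Finset.mem_filter.mp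
        (hmemP1 D hDP e he hcon)).2
    -- apply key to P2 on [1, x]
    have hK2 := key x 0 P2
      (fun D hD => P.nonempty_of_mem_parts (Finset.mem_filter.mp hD).1)
      (fun D hD => by simpa using hbd2 D hD)
      (by
        intro i hi1 hi2
        simp only [Nat.zero_add] at hi1 hi2
        obtain ⟨D, hD, hiD⟩ := P.exists_mem (Finset.mem_Icc.2 ⟨hi1, by omega⟩)
        refine ⟨D, ?_, hiD⟩
        rw [hP2, Finset.mem_filter]
        refine ⟨hD, fun hsub => ?_⟩
        have := Finset.mem_Icc.mp (hsub hiD)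
        omega)
      (fun B' hB' C' hC' y hy hy' => P.eq_of_mem_parts (Finset.mem_filter.mp hB').1
        (Finset.mem_filter.mp hC').1 hy hy')
      (by
        rintro a' b' c' d' ha1 ha2 ha3 ⟨B1, hB1, hx1, hx2⟩ ⟨B2, hB2, hx3, hx4⟩
        obtain ⟨E, hE, haE, hbE⟩ := hPnc a' b' c' d' ha1 ha2 ha3
          ⟨B1, (Finset.mem_filter.mp hB1).1, hx1, hx2⟩
          ⟨B2, (Finset.mem_filter.mp hB2).1, hx3, hx4⟩
        refine ⟨E, ?_, haE, hbE⟩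
        rw [hP2, Finset.mem_filter]
        refine ⟨hE, fun hsub => ?_⟩
        have h1' := Finset.mem_Icc.mp (hsub haE)
        have h2' := Finset.mem_Icc.mp (hbd2 B1 hB1 hx1)
        omega)
      (fun B' hB' i hi hi' => hPcons i ⟨B', (Finset.mem_filter.mp hB').1, hi, hi'⟩)
      (by omega)
    -- apply key to P1 on [x+1, 2n+1]
    have hK1 := key (2*n+1-x) x P1
      (fun D hD => P.nonempty_of_mem_parts (Finset.mem_filter.mp hD).1)
      (fun D hD => by
        rw [show x + (2*n+1-x) = 2*n+1 by omega]
        exact (Finset.mem_filter.mp hD).2)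
      (by
        intro i hi1 hi2
        rw [show x + (2*n+1-x) = 2*n+1 by omega] at hi2
        obtain ⟨D, hD, hiD⟩ := P.exists_mem (Finset.mem_Icc.2 ⟨by omega, hi2⟩)
        exact ⟨D, hmemP1 D hD i hiD hi1, hiD⟩)
      (fun B' hB' C' hC' y hy hy' => P.eq_of_mem_parts (Finset.mem_filter.mp hB').1
        (Finset.mem_filter.mp hC').1 hy hy')
      (by
        rintro a' b' c' d' ha1 ha2 ha3 ⟨B1, hB1, hx1, hx2⟩ ⟨B2, hB2, hx3, hx4⟩
        obtain ⟨E, hE, haE, hbE⟩ := hPnc a' b' c' d' ha1 ha2 ha3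
          ⟨B1, (Finset.mem_filter.mp hB1).1, hx1, hx2⟩
          ⟨B2, (Finset.mem_filter.mp hB2).1, hx3, hx4⟩
        have hbd1 := Finset.mem_Icc.mp ((Finset.mem_filter.mp hB1).2 hx1)
        exact ⟨E, hmemP1 E hE a' haE hbd1.1, haE, hbE⟩)
      (fun B' hB' i hi hi' => hPcons i ⟨B', (Finset.mem_filter.mp hB').1, hi, hi'⟩)
      (by omega)
    have hsum : P1.card + P2.card = P.parts.card := by
      rw [hP1, hP2]
      exact Finset.card_filter_add_card_filter_not _
    omega
  refine ⟨h1, ?_⟩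
  obtain ⟨B, hB, hmB⟩ := Q.exists_mem (Finset.mem_Icc.2 ⟨by omega, le_rfl⟩)
  have : B = {2*n+2} := by
    apply Finset.eq_singleton_iff_unique_mem.mpr
    refine ⟨hmB, fun y hy => ?_⟩
    by_contra hne
    have hybd := Finset.mem_Icc.mp (Q.le hB hy)
    have hy2 : y ≤ 2*n+1 := by omega
    exact h1 y hybd.1 hy2 ⟨B, hB, hy, hmB⟩
  exact this ▸ hB
end

section
/- 2n+1 is the largest integer m such that there exists a partition of [m] into n+1 blocks that is non-crossing and has no block containing two consecutive integers. -/
open scoped Classical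

-- construction
def myParts (n : ℕ) : Finset (Finset ℕ) :=
  (Finset.Icc 1 (n+1)).image (fun k => ({k, 2*n+2-k} : Finset ℕ))

lemma mem_blk {n k x : ℕ} : x ∈ ({k, 2*n+2-k} : Finset ℕ) ↔ x = k ∨ x = 2*n+2-k := by
  simp

noncomputable def myP (n : ℕ) : Finpartition (Finset.Icc 1 (2*n+1)) where
  parts := myParts n
  supIndep := by
    rw [Finset.supIndep_iff_pairwiseDisjoint]
    rintro B hB C hC hne
    simp only [myParts, Finset.coe_image, Set.mem_image, Finset.mem_coe,
      Finset.mem_Icc] at hB hC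
    obtain ⟨k, ⟨hk1, hk2⟩, rfl⟩ := hB
    obtain ⟨j, ⟨hj1, hj2⟩, rfl⟩ := hC
    have hkj : k ≠ j := by rintro rfl; exact hne rfl
    refine Finset.disjoint_left.2 fun x hx hx' => ?_
    simp only [id] at hx hx'
    rw [mem_blk] at hx hx'
    omega
  sup_parts := by
    ext x
    rw [Finset.mem_sup]
    simp only [myParts, Finset.mem_image, Finset.mem_Icc, id]
    constructor
    · rintro ⟨B, ⟨k, ⟨hk1, hk2⟩, rfl⟩, hx⟩
      rw [mem_blk] at hx
      omega
    · intro hx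
      by_cases h : x ≤ n+1
      · exact ⟨_, ⟨x, ⟨hx.1, h⟩, rfl⟩, mem_blk.2 (Or.inl rfl)⟩
      · exact ⟨_, ⟨2*n+2-x, ⟨by omega, by omega⟩, rfl⟩, mem_blk.2 (Or.inr (by omega))⟩
  bot_notMem := by
    simp only [myParts, Finset.bot_eq_empty, Finset.mem_image, Finset.mem_Icc]
    rintro ⟨k, hk, h⟩
    have : k ∈ ({k, 2*n+2-k} : Finset ℕ) := mem_blk.2 (Or.inl rfl)
    rw [h] at this
    exact absurd this (Finset.notMem_empty k)

lemma myP_sameblock {n a b : ℕ} (h : SameBlock (myP n) a b) : a = b ∨ a + b = 2*n+2 := by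
  obtain ⟨B, hB, ha, hb⟩ := h
  simp only [myP, myParts, Finset.mem_image, Finset.mem_Icc] at hB
  obtain ⟨k, ⟨hk1, hk2⟩, rfl⟩ := hB
  rw [mem_blk] at ha hb
  omega

lemma myP_card (n : ℕ) : (myP n).parts.card = n + 1 := by
  show (myParts n).card = n + 1
  have hinj : Set.InjOn (fun k => ({k, 2*n+2-k} : Finset ℕ)) (Finset.Icc 1 (n+1)) := by
    intro k hk j hj h
    rw [Finset.mem_coe, Finset.mem_Icc] at hk hj
    have hh : ({k, 2*n+2-k} : Finset ℕ) = {j, 2*n+2-j} := h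
    have : k ∈ ({j, 2*n+2-j} : Finset ℕ) := hh ▸ mem_blk.2 (Or.inl rfl)
    rw [mem_blk] at this
    omega
  rw [myParts, Finset.card_image_of_injOn hinj, Nat.card_Icc]
  omega

-- upper bound helpers
lemma sameblock_symm {m : ℕ} {P : Finpartition (Finset.Icc 1 m)} {a b : ℕ}
    (h : SameBlock P a b) : SameBlock P b a := by
  obtain ⟨B, hB, ha, hb⟩ := h; exact ⟨B, hB, hb, ha⟩

lemma sameblock_trans {m : ℕ} {P : Finpartition (Finset.Icc 1 m)} {a b c : ℕ}
    (h1 : SameBlock P a b) (h2 : SameBlock P a c) : SameBlock P b c := by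
  obtain ⟨B, hB, ha, hb⟩ := h1
  obtain ⟨C, hC, ha', hc⟩ := h2
  have := P.eq_of_mem_parts hB hC ha ha'
  subst this
  exact ⟨B, hB, hb, hc⟩

lemma sameblock_mem {m : ℕ} {P : Finpartition (Finset.Icc 1 m)} {a b : ℕ}
    (h : SameBlock P a b) : b ∈ Finset.Icc 1 m := by
  obtain ⟨B, hB, _, hb⟩ := h; exact P.le hB hb

lemma upper_bound {m n : ℕ} (P : Finpartition (Finset.Icc 1 m))
    (hNC : NonCrossing P) (hNCons : NoConsec P) (hcard : P.parts.card = n + 1) :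
    m ≤ 2 * n + 1 := by
  rcases Nat.eq_zero_or_pos m with rfl | hm
  · omega
  set Max := (Finset.Icc 1 m).filter (fun a => ∀ b, SameBlock P a b → b ≤ a) with hMaxdef
  set NonMax := (Finset.Icc 1 m).filter (fun a => ∃ b, a < b ∧ SameBlock P a b) with hNMdef
  set MinAll := (Finset.Icc 1 m).filter (fun x => ∀ y, SameBlock P x y → x ≤ y) with hMindef
  -- cover
  have hcover : Finset.Icc 1 m ⊆ NonMax ∪ Max := by
    intro a ha
    by_cases h : ∃ b, a < b ∧ SameBlock P a b
    · exact Finset.mem_union_left _ (Finset.mem_filter.2 ⟨ha, h⟩)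
    · push_neg at h
      refine Finset.mem_union_right _ (Finset.mem_filter.2 ⟨ha, fun b hb => ?_⟩)
      by_contra hba
      exact h b (by omega) hb
  -- Max card
  have hMaxcard : Max.card ≤ n + 1 := by
    rw [← hcard]
    apply Finset.card_le_card_of_injOn P.part
    · intro a ha
      rw [Finset.mem_coe, hMaxdef, Finset.mem_filter] at ha
      exact P.part_mem.2 ha.1
    · intro a ha a' ha' hpp
      rw [Finset.mem_coe, hMaxdef, Finset.mem_filter] at ha ha'
      have h1 : SameBlock P a a' :=
        ⟨P.part a, P.part_mem.2 ha.1, P.mem_part ha.1, hpp ▸ P.mem_part ha'.1⟩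
      have h2 := ha.2 a' h1
      have h3 := ha'.2 a (sameblock_symm h1)
      omega
  -- MinAll card
  have hMincard : MinAll.card ≤ n + 1 := by
    rw [← hcard]
    apply Finset.card_le_card_of_injOn P.part
    · intro a ha
      rw [Finset.mem_coe, hMindef, Finset.mem_filter] at ha
      exact P.part_mem.2 ha.1
    · intro a ha a' ha' hpp
      rw [Finset.mem_coe, hMindef, Finset.mem_filter] at ha ha'
      have h1 : SameBlock P a a' :=
        ⟨P.part a, P.part_mem.2 ha.1, P.mem_part ha.1, hpp ▸ P.mem_part ha'.1⟩
      have h2 := ha.2 a' h1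
      have h3 := ha'.2 a (sameblock_symm h1)
      omega
  have h1min : (1 : ℕ) ∈ MinAll := by
    rw [hMindef, Finset.mem_filter, Finset.mem_Icc]
    refine ⟨⟨le_refl 1, hm⟩, fun y hy => ?_⟩
    have := sameblock_mem hy
    rw [Finset.mem_Icc] at this
    omega
  -- NonMax injects into MinAll.erase 1
  have hNMcard : NonMax.card ≤ MinAll.card - 1 := by
    rw [← Finset.card_erase_of_mem h1min]
    apply Finset.card_le_card_of_injOn (· + 1)
    · intro a ha
      rw [Finset.mem_coe, hNMdef, Finset.mem_filter, Finset.mem_Icc] at ha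
      obtain ⟨⟨ha1, ham⟩, b, hab, hsb⟩ := ha
      have hbm : b ≤ m := by
        have := sameblock_mem hsb; rw [Finset.mem_Icc] at this; omega
      show a + 1 ∈ MinAll.erase 1
      rw [Finset.mem_erase, hMindef, Finset.mem_filter, Finset.mem_Icc]
      refine ⟨by omega, ⟨by omega, fun y hy => ?_⟩⟩
      by_contra hlt
      push_neg at hlt
      have hy1 : 1 ≤ y := by
        have := sameblock_mem hy; rw [Finset.mem_Icc] at this; omega
      rcases eq_or_lt_of_le (Nat.lt_succ_iff.1 hlt) with rfl | hya
      · exact hNCons y (sameblock_symm hy)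
      · -- y < a
        have hb : a + 1 < b := by
          rcases eq_or_lt_of_le (Nat.succ_le_of_lt hab) with h | h
        
          · exact absurd (by rwa [← h] at hsb) (hNCons a)
          · exact h
        have := hNC y a (a+1) b hya (Nat.lt_succ_self a) hb (sameblock_symm hy) hsb
        -- this : SameBlock P y a ; hy : SameBlock P (a+1) y
        exact hNCons a (sameblock_trans this (sameblock_symm hy))
    · intro a _ a' _ h
      have : a + 1 = a' + 1 := h
      omega
  have hm' : m = (Finset.Icc 1 m).card := by rw [Nat.card_Icc]; omega
  have := Finset.card_le_card hcover
  have := Finset.card_union_le NonMax Max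
  omega

theorem stmt8 (n : ℕ) :
    IsGreatest {m : ℕ | ∃ P : Finpartition (Finset.Icc 1 m),
      NonCrossing P ∧ NoConsec P ∧ P.parts.card = n + 1} (2 * n + 1) := by
  constructor
  · refine ⟨myP n, ?_, ?_, myP_card n⟩
    · intro a b c d hab hbc hcd hac hbd
      exfalso
      have h1 := myP_sameblock hac
      have h2 := myP_sameblock hbd
      omega
    · intro i hi
      have := myP_sameblock hi
      omega
  · rintro m ⟨P, hNC, hNCons, hcard⟩
    exact upper_bound P hNC hNCons hcard
end

section
/- The cardinality of S_n (integer sequences s_1,...,s_n with 1 ≤ s_i ≤ i and s_i = j ⟹ s_{i-r} ≤ j-r for 1 ≤ r ≤ j-1) equals the n-th Catalan number C_n = (1/(n+1)) * binomial(2n, n). -/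
open scoped Classical

namespace Stmt15Aux

/-- validity of a (0-indexed) forest parent sequence. -/
def Valid (l : List ℕ) : Prop :=
  ∀ k, k < l.length → l.getD k 0 ≤ k ∧
    ∀ j, l.getD k 0 ≤ j → j ≤ k → l.getD k 0 ≤ l.getD j 0

def pim (m x : ℕ) : ℕ := if x = 0 then 0 else x + m

lemma pim_inj (m : ℕ) : Function.Injective (pim m) := by
  intro x y h
  unfold pim at h
  split_ifs at h <;> omega

def g : Tree Unit → List ℕ
  | BinaryTree.nil => []
  | BinaryTree.node _ A B => 0 :: ((g A).map (· + 1) ++ (g B).map (pim ((g A).length + 1)))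

lemma length_g (T : Tree Unit) : (g T).length = T.numNodes := by
  induction T with
  | nil => rfl
  | node x A B ihA ihB => simp [g, ihA, ihB]

lemma getD_append_left {a b : List ℕ} {k : ℕ} (h : k < a.length) :
    (a ++ b).getD k 0 = a.getD k 0 := by
  simp [List.getD_eq_getElem?_getD, List.getElem?_append, h]

lemma getD_append_right {a b : List ℕ} {k : ℕ} (h : a.length ≤ k) :
    (a ++ b).getD k 0 = b.getD (k - a.length) 0 := by
  simp [List.getD_eq_getElem?_getD, List.getElem?_append, Nat.not_lt.mpr h]

lemma getD_map {f : ℕ → ℕ} {l : List ℕ} {k : ℕ} (h : k < l.length) :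
    (l.map f).getD k 0 = f (l.getD k 0) := by
  simp [List.getD_eq_getElem?_getD, List.getElem?_map, List.getElem?_eq_getElem h]

lemma getD_mem {l : List ℕ} {k : ℕ} (h : k < l.length) : l.getD k 0 ∈ l := by
  rw [List.getD_eq_getElem _ _ h]; exact List.getElem_mem h

lemma dropWhile_head_zero (r : List ℕ) (h : r.dropWhile (· ≠ 0) ≠ []) :
    (r.dropWhile (· ≠ 0)).getD 0 0 = 0 := by
  have h2 := List.head_dropWhile_not (p := fun y => decide (y ≠ 0)) (l := r) h
  rw [List.head_eq_getElem] at h2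
  rw [List.getD_eq_getElem _ _ (List.length_pos_iff.mpr h)]
  simpa using h2

section Glue

variable (a b : List ℕ)

lemma glue_len : (0 :: (a.map (· + 1) ++ b.map (pim (a.length + 1)))).length
    = a.length + b.length + 1 := by simp

lemma glue_getL {k : ℕ} (hk : k < a.length) :
    (0 :: (a.map (· + 1) ++ b.map (pim (a.length + 1)))).getD (k + 1) 0
      = a.getD k 0 + 1 := by
  rw [List.getD_cons_succ, getD_append_left (by simpa), getD_map hk]

lemma glue_getR {q : ℕ} (hq : q < b.length) :
    (0 :: (a.map (· + 1) ++ b.map (pim (a.length + 1)))).getD (a.length + 1 + q) 0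
      = pim (a.length + 1) (b.getD q 0) := by
  have e : a.length + 1 + q = (a.length + q) + 1 := by omega
  rw [e, List.getD_cons_succ, getD_append_right (by simp)]
  simp only [List.length_map]
  have e2 : a.length + q - a.length = q := by omega
  rw [e2, getD_map hq]

lemma valid_glue (ha : Valid a) (hb : Valid b) :
    Valid (0 :: (a.map (· + 1) ++ b.map (pim (a.length + 1)))) := by
  set l := 0 :: (a.map (· + 1) ++ b.map (pim (a.length + 1))) with hl
  have hlen : l.length = a.length + b.length + 1 := glue_len a b
  intro k hk
  rw [hlen] at hk
  rcases Nat.lt_or_ge k (a.length + 1) with hkl | hkr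
  · rcases Nat.eq_zero_or_pos k with rfl | hk0
    · refine ⟨le_refl 0, fun j hj1 hj2 => ?_⟩
      have hj0 : j = 0 := by omega
      subst hj0
      exact le_refl _
    · obtain ⟨k', rfl⟩ : ∃ k', k = k' + 1 := ⟨k - 1, by omega⟩
      have hk' : k' < a.length := by omega
      rw [glue_getL a b hk']
      have hak := ha k' hk'
      refine ⟨by omega, fun j hj1 hj2 => ?_⟩
      have hj0 : 1 ≤ j := by omega
      obtain ⟨j', rfl⟩ : ∃ j', j = j' + 1 := ⟨j - 1, by omega⟩
      have hj' : j' < a.length := by omega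
      rw [glue_getL a b hj']
      have := hak.2 j' (by omega) (by omega)
      omega
  · obtain ⟨q, rfl⟩ : ∃ q, k = a.length + 1 + q := ⟨k - (a.length + 1), by omega⟩
    have hq : q < b.length := by omega
    rw [glue_getR a b hq]
    have hbk := hb q hq
    by_cases h0 : b.getD q 0 = 0
    · rw [h0]
      refine ⟨by simp [pim], fun j hj1 hj2 => by simp [pim]⟩
    · have hpv : pim (a.length + 1) (b.getD q 0) = b.getD q 0 + (a.length + 1) := by
        unfold pim; rw [if_neg h0]
      rw [hpv]
      refine ⟨by omega, fun j hj1 hj2 => ?_⟩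
      obtain ⟨j', rfl⟩ : ∃ j', j = a.length + 1 + j' := ⟨j - (a.length + 1), by omega⟩
      have hj' : j' < b.length := by omega
      rw [glue_getR a b hj']
      have hbj := hbk.2 j' (by omega) (by omega)
      have h0' : b.getD j' 0 ≠ 0 := by omega
      rw [show pim (a.length + 1) (b.getD j' 0) = b.getD j' 0 + (a.length + 1) from by
        unfold pim; rw [if_neg h0']]
      omega

end Glue

lemma valid_g (T : Tree Unit) : Valid (g T) := by
  induction T with
  | nil => intro k hk; simp [g] at hk
  | node x A B ihA ihB => exact valid_glue _ _ ihA ihB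

lemma g_eq_nil {T : Tree Unit} (h : g T = []) : T = Tree.nil := by
  cases T with
  | nil => rfl
  | node x A B => simp [g] at h

lemma inj_len_le {A B A' B' : Tree Unit}
    (h : (g A).map (· + 1) ++ (g B).map (pim ((g A).length + 1))
       = (g A').map (· + 1) ++ (g B').map (pim ((g A').length + 1))) :
    (g A).length ≤ (g A').length := by
  by_contra hlt
  push_neg at hlt
  have hlen : (g A).length + (g B).length = (g A').length + (g B').length := by
    have := congrArg List.length h; simpa using this
  have hB'ne : g B' ≠ [] := by
    intro e
    rw [e] at hlen
    simp at hlen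
    omega
  have hB'head : (g B').getD 0 0 = 0 := by
    cases B' with
    | nil => simp [g] at hB'ne
    | node x C D => simp [g]
  set k := (g A').length with hk
  have hLHS : ((g A).map (· + 1) ++ (g B).map (pim ((g A).length + 1))).getD k 0
      = (g A).getD k 0 + 1 := by
    rw [getD_append_left (by simpa using hlt), getD_map hlt]
  have hRHS : ((g A').map (· + 1) ++ (g B').map (pim ((g A').length + 1))).getD k 0
      = 0 := by
    rw [getD_append_right (by simp [hk])]
    simp only [List.length_map, ← hk, Nat.sub_self]
    rw [getD_map (List.length_pos_iff.mpr hB'ne), hB'head]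
    simp [pim]
  rw [h, hRHS] at hLHS
  omega

lemma g_inj : ∀ {T T' : Tree Unit}, g T = g T' → T = T' := by
  intro T
  induction T with
  | nil =>
    intro T' h
    exact (g_eq_nil h.symm).symm
  | node x A B ihA ihB =>
    intro T' h
    cases T' with
    | nil => simp [g] at h
    | node x' A' B' =>
      simp only [g, List.cons.injEq] at h
      have htail := h.2
      have hlen : (g A).length = (g A').length :=
        le_antisymm (inj_len_le htail) (inj_len_le htail.symm)
      have hsplit := List.append_inj htail (by simp [hlen])
      have hA : g A = g A' :=
        List.map_injective_iff.mpr (fun u v huv => by omega) hsplit.1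
      have hB : g B = g B' := by
        have h2 := hsplit.2
        rw [hlen] at h2
        exact List.map_injective_iff.mpr (pim_inj _) h2
      cases x; cases x'
      rw [ihA hA, ihB hB]

lemma g_surj : ∀ N l, l.length = N → Valid l → ∃ T : Tree Unit, g T = l := by
  intro N
  induction N using Nat.strong_induction_on with
  | _ N IH =>
    intro l hlen hv
    cases l with
    | nil => exact ⟨Tree.nil, rfl⟩
    | cons x r =>
      have hNr : N = r.length + 1 := by simpa using hlen.symm
      have hx : x = 0 := by
        have := (hv 0 (by simp)).1
        simpa using this
      subst hx
      set a0 := r.takeWhile (· ≠ 0) with ha0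
      set b0 := r.dropWhile (· ≠ 0) with hb0
      have hsplit : a0 ++ b0 = r := List.takeWhile_append_dropWhile
      have hab : a0.length + b0.length = r.length := by
        rw [← hsplit]; simp
      have ha0ne : ∀ y ∈ a0, y ≠ 0 := by
        intro y hy
        have := List.mem_takeWhile_imp hy
        simpa using this
      have hb0head : b0 ≠ [] → b0.getD 0 0 = 0 := by
        intro hne
        rw [hb0] at hne ⊢
        exact dropWhile_head_zero r hne
      have hra : ∀ k, k < a0.length → r.getD k 0 = a0.getD k 0 := by
        intro k hk
        rw [← hsplit, getD_append_left hk]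
      have hrb : ∀ q, q < b0.length → r.getD (a0.length + q) 0 = b0.getD q 0 := by
        intro q hq
        rw [← hsplit, getD_append_right (by omega)]
        congr 1
        omega
      have hlget : ∀ k, (0 :: r : List ℕ).getD (k + 1) 0 = r.getD k 0 := by
        intro k; simp
      set m := a0.length + 1 with hm
      have hva : ∀ k, k < a0.length →
          a0.getD k 0 ≤ k + 1 ∧ 1 ≤ a0.getD k 0 := by
        intro k hk
        constructor
        · have := (hv (k + 1) (by simp; omega)).1
          rw [hlget, hra k hk] at this
          exact this
        · have := ha0ne _ (getD_mem hk)
          omega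
      set a := a0.map (· - 1) with ha
      set b := b0.map (· - m) with hb
      have hA1 : a.length = a0.length := by simp [ha]
      have hB1 : b.length = b0.length := by simp [hb]
      have hVa : Valid a := by
        intro k hk
        rw [hA1] at hk
        rw [ha, getD_map hk]
        have h1 := hva k hk
        refine ⟨by omega, fun j hj1 hj2 => ?_⟩
        have hj : j < a0.length := by omega
        rw [getD_map hj]
        have := (hv (k + 1) (by simp; omega)).2 (j + 1) (by
          rw [hlget, hra k hk]; omega) (by omega)
        rw [hlget, hlget, hra k hk, hra j hj] at this
        omega
      have hbig : ∀ q, q < b0.length → b0.getD q 0 = 0 ∨ m < b0.getD q 0 := by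
        intro q hq
        have hne : b0 ≠ [] := by
          intro e; rw [e] at hq; simp at hq
        have h0 : r.getD a0.length 0 = 0 := by
          have := hrb 0 (List.length_pos_iff.mpr hne)
          rw [Nat.add_zero] at this
          rw [this]
          exact hb0head hne
        by_contra hcon
        push_neg at hcon
        obtain ⟨h1, h2⟩ := hcon
        have hx1 : 1 ≤ b0.getD q 0 := by omega
        have := (hv (a0.length + q + 1) (by simp; omega)).2 (a0.length + 1) (by
          rw [hlget, hrb q hq]; omega) (by omega)
        rw [hlget, hlget, hrb q hq] at this
        rw [h0] at this
        omega
      have hVb : Valid b := by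
        intro q hq
        rw [hB1] at hq
        rw [hb, getD_map hq]
        rcases hbig q hq with h0 | h0
        · rw [h0]
          exact ⟨by omega, fun j hj1 hj2 => by omega⟩
        · have hub : b0.getD q 0 ≤ a0.length + q + 1 := by
            have := (hv (a0.length + q + 1) (by simp; omega)).1
            rw [hlget, hrb q hq] at this
            omega
          refine ⟨by omega, fun j hj1 hj2 => ?_⟩
          have hj : j < b0.length := by omega
          rw [getD_map hj]
          have := (hv (a0.length + q + 1) (by simp; omega)).2 (a0.length + j + 1)
            (by rw [hlget, hrb q hq]; omega) (by omega)
          rw [hlget, hlget, hrb q hq, hrb j hj] at this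
          omega
      obtain ⟨A, hA2⟩ := IH a.length (by omega) a rfl hVa
      obtain ⟨B, hB2⟩ := IH b.length (by omega) b rfl hVb
      refine ⟨Tree.node () A B, ?_⟩
      simp only [g]
      rw [hA2, hB2, hA1]
      congr 1
      rw [← hsplit]
      congr 1
      · rw [ha, List.map_map]
        conv_rhs => rw [← List.map_id a0]
        apply List.map_congr_left
        intro y hy
        have := ha0ne y hy
        simp only [Function.comp_apply, id_eq]
        omega
      · rw [hb, List.map_map]
        conv_rhs => rw [← List.map_id b0]
        apply List.map_congr_left
        intro y hy
        obtain ⟨qy, hqy, rfl⟩ := List.mem_iff_getElem.mp hy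
        have hbq := hbig qy hqy
        rw [List.getD_eq_getElem _ _ hqy] at hbq
        simp only [Function.comp_apply, id_eq]
        rcases hbq with h | h
        · simp [pim, h]
        · have hne : b0[qy] - m ≠ 0 := by omega
          unfold pim
          rw [if_neg hne]
          omega

def sFun (n : ℕ) (l : List ℕ) : ℕ → ℕ := fun i =>
  if 1 ≤ i ∧ i ≤ n then i - l.getD (i - 1) 0 else 0

lemma sFun_mem {n : ℕ} {l : List ℕ} (hv : Valid l) (hlen : l.length = n) :
    InS n (sFun n l) ∧ ∀ i, sFun n l i ≠ 0 → 1 ≤ i ∧ i ≤ n := by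
  have hget : ∀ i, 1 ≤ i → i ≤ n → sFun n l i = i - l.getD (i - 1) 0 := by
    intro i h1 h2; unfold sFun; rw [if_pos ⟨h1, h2⟩]
  have hub : ∀ i, 1 ≤ i → i ≤ n → l.getD (i - 1) 0 ≤ i - 1 := by
    intro i h1 h2
    exact (hv (i - 1) (by omega)).1
  refine ⟨⟨?_, ?_⟩, ?_⟩
  · intro i h1 h2
    rw [hget i h1 h2]
    have := hub i h1 h2
    omega
  · intro i j r h1 h2 hj hr1 hr2
    rw [hget i h1 h2] at hj
    have hvi := hub i h1 h2
    set v := l.getD (i - 1) 0 with hvdef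
    have hji : j + v = i := by omega
    have hrj : r + 1 ≤ j := by omega
    have h1' : 1 ≤ i - r := by omega
    have h2' : i - r ≤ n := by omega
    rw [hget _ h1' h2']
    have hw := (hv (i - 1) (by omega)).2 (i - r - 1) (by omega) (by omega)
    have hub' := (hv (i - r - 1) (by omega)).1
    omega
  · intro i hi
    by_contra hcon
    apply hi
    unfold sFun
    rw [if_neg hcon]

def toL (n : ℕ) (s : ℕ → ℕ) : List ℕ :=
  (List.range n).map (fun k => k + 1 - s (k + 1))

lemma toL_length (n : ℕ) (s : ℕ → ℕ) : (toL n s).length = n := by simp [toL]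

lemma toL_getD {n : ℕ} {s : ℕ → ℕ} {k : ℕ} (hk : k < n) :
    (toL n s).getD k 0 = k + 1 - s (k + 1) := by
  unfold toL
  rw [getD_map (by simpa), List.getD_eq_getElem _ _ (by simpa)]
  simp

lemma valid_toL {n : ℕ} {s : ℕ → ℕ} (hs : InS n s) : Valid (toL n s) := by
  intro k hk
  rw [toL_length] at hk
  rw [toL_getD hk]
  have h1 := hs.1 (k + 1) (by omega) (by omega)
  refine ⟨by omega, fun j hj1 hj2 => ?_⟩
  rw [toL_getD (show j < n by omega)]
  rcases Nat.eq_or_lt_of_le hj2 with rfl | hjlt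
  · exact le_refl _
  · set r := k - j with hr
    have hr1 : 1 ≤ r := by omega
    have h2 := hs.2 (k + 1) (s (k + 1)) r (by omega) (by omega) rfl hr1 (by omega)
    have hj1' := hs.1 (j + 1) (by omega) (by omega)
    rw [show k + 1 - r = j + 1 from by omega] at h2
    omega

lemma sFun_toL {n : ℕ} {s : ℕ → ℕ} (hs : InS n s)
    (hsupp : ∀ i, s i ≠ 0 → 1 ≤ i ∧ i ≤ n) : sFun n (toL n s) = s := by
  funext i
  by_cases h : 1 ≤ i ∧ i ≤ n
  · have h1 := hs.1 i h.1 h.2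
    unfold sFun
    rw [if_pos h, toL_getD (show i - 1 < n by omega)]
    rw [show i - 1 + 1 = i from by omega]
    omega
  · unfold sFun
    rw [if_neg h]
    by_contra hne
    exact h (hsupp i (fun hh => hne hh.symm))

lemma sFun_inj {l l' : List ℕ} {n : ℕ} (hv : Valid l) (hv' : Valid l')
    (hl : l.length = n) (hl' : l'.length = n) (h : sFun n l = sFun n l') :
    l = l' := by
  apply List.ext_getElem (by omega)
  intro k h1 h2
  rw [← List.getD_eq_getElem l 0 h1, ← List.getD_eq_getElem l' 0 h2]
  have e1 := (hv k (by omega)).1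
  have e2 := (hv' k (by omega)).1
  have hthis := congrFun h (k + 1)
  unfold sFun at hthis
  rw [if_pos ⟨by omega, by omega⟩, if_pos ⟨by omega, by omega⟩] at hthis
  rw [Nat.add_sub_cancel] at hthis
  omega

end Stmt15Aux

open Stmt15Aux in
theorem stmt15 (n : ℕ) :
    Set.ncard {s : ℕ → ℕ | InS n s ∧ ∀ i : ℕ, s i ≠ 0 → 1 ≤ i ∧ i ≤ n} =
      (2 * n).choose n / (n + 1) := by
  have hset : {s : ℕ → ℕ | InS n s ∧ ∀ i : ℕ, s i ≠ 0 → 1 ≤ i ∧ i ≤ n}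
      = (fun T => sFun n (g T)) '' {T : Tree Unit | T.numNodes = n} := by
    ext s
    simp only [Set.mem_setOf_eq, Set.mem_image]
    constructor
    · rintro ⟨hs, hsupp⟩
      obtain ⟨T, hT⟩ := g_surj (toL n s).length (toL n s) rfl (valid_toL hs)
      refine ⟨T, ?_, ?_⟩
      · rw [← length_g, hT, toL_length]
      · rw [hT, sFun_toL hs hsupp]
    · rintro ⟨T, hTn, rfl⟩
      exact sFun_mem (valid_g T) (by rw [length_g, hTn])
  have hinj : Set.InjOn (fun T => sFun n (g T)) {T : Tree Unit | T.numNodes = n} := by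
    intro T hT T' hT' hEq
    exact g_inj (sFun_inj (valid_g T) (valid_g T')
      (by rw [length_g]; exact hT) (by rw [length_g]; exact hT') hEq)
  have hfin : {T : Tree Unit | T.numNodes = n} = ↑(Tree.treesOfNumNodesEq n) := by
    ext T
    simp [BinaryTree.mem_treesOfNumNodesEq]
  rw [hset, Set.ncard_image_of_injOn hinj, hfin, Set.ncard_coe_finset,
    BinaryTree.treesOfNumNodesEq_card_eq_catalan, catalan_eq_centralBinom_div]
  rfl
end
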